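/- arXiv:2008.06801 — 10 statements merged into one kernel-verified Lean document; each statement's English description precedes it below -/
import Mathlib

section
/- Let R be a commutative ring and n : ℕ. If P and Q in MvPolynomial (Fin n) R are both multilinear and eval at every 0/1 point agree (i.e., for every b : Fin n → Bool, evaluating P and Q at the point (fun i => if b i then (1:R) else 0) gives the same value), then P = Q. -/
open MvPolynomial

/-- A multivariate polynomial is multilinear if every monomial in its support
has exponent at most 1 in each variable. -/
def Multilinear {R : Type*} [CommRing R] {n : ℕ} (P : MvPolynomial (Fin n) R) : Prop :=
  ∀ m ∈ P.support, ∀ i : Fin n, m i ≤ 1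

lemma multilinear_zero_of_eval_boolean_zero {R : Type*} [CommRing R] {n : ℕ}
    (D : MvPolynomial (Fin n) R) (hD : Multilinear D)
    (h0 : ∀ b : Fin n → Bool, eval (fun i => if b i then (1 : R) else 0) D = 0) :
    D = 0 := by
  have key : ∀ k (m : Fin n →₀ ℕ), m.support.card = k → coeff m D = 0 := by
    intro k
    induction k using Nat.strong_induction_on with
    | _ k IH =>
    intro m hk
    by_cases hm : m ∈ D.support
    swap
    · exact notMem_support_iff.mp hm
    set b : Fin n → Bool := fun i => decide (m i ≠ 0) with hb
    set x : Fin n → R := fun i => if b i then 1 else 0 with hx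
    have hx1 : ∀ i ∈ m.support, x i = 1 := by
      intro i hi
      simp [hx, hb, Finsupp.mem_support_iff.mp hi]
    have hx0 : ∀ i, i ∉ m.support → x i = 0 := by
      intro i hi
      simp [hx, hb, Finsupp.notMem_support_iff.mp hi]
    have this0 : eval x D = 0 := h0 b
    rw [eval_eq] at this0
    rw [Finset.sum_eq_single m] at this0
    · rw [Finset.prod_congr rfl (fun i hi => by rw [hx1 i hi, one_pow])] at this0
      simpa using this0
    · intro d hd hdm
      by_cases hsub : d.support ⊆ m.support
      · have hne : d.support ≠ m.support := by
          intro hEq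
          apply hdm
          ext i
          by_cases hi : i ∈ m.support
          · have h1 : d i ≤ 1 := hD d hd i
            have h2 : m i ≤ 1 := hD m hm i
            have hd1 : d i ≠ 0 := Finsupp.mem_support_iff.mp (hEq ▸ hi)
            have hm1 : m i ≠ 0 := Finsupp.mem_support_iff.mp hi
            omega
          · have hi' : i ∉ d.support := hEq ▸ hi
            rw [Finsupp.notMem_support_iff.mp hi', Finsupp.notMem_support_iff.mp hi]
        have hlt : d.support.card < m.support.card :=
          Finset.card_lt_card (lt_of_le_of_ne hsub hne)
        rw [IH _ (hk ▸ hlt) d rfl, zero_mul]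
      · obtain ⟨i, hid, him⟩ := Finset.not_subset.mp hsub
        rw [Finset.prod_eq_zero hid, mul_zero]
        rw [hx0 i him]
        exact zero_pow (Finsupp.mem_support_iff.mp hid)
    · intro h; exact absurd hm h
  ext m
  rw [coeff_zero]
  exact key _ m rfl

theorem multilinear_eq_of_eval_boolean_eq (R : Type*) [CommRing R] (n : ℕ)
    (P Q : MvPolynomial (Fin n) R) (hP : Multilinear P) (hQ : Multilinear Q)
    (h : ∀ b : Fin n → Bool,
      MvPolynomial.eval (fun i => if b i then (1 : R) else 0) P =
      MvPolynomial.eval (fun i => if b i then (1 : R) else 0) Q) :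
    P = Q := by
  have hD : Multilinear (P - Q) := by
    intro m hm i
    have : coeff m (P - Q) ≠ 0 := mem_support_iff.mp hm
    rw [coeff_sub] at this
    by_cases hp : m ∈ P.support
    · exact hP m hp i
    by_cases hq : m ∈ Q.support
    · exact hQ m hq i
    rw [notMem_support_iff.mp hp, notMem_support_iff.mp hq, sub_zero] at this
    exact absurd rfl this
  have := multilinear_zero_of_eval_boolean_zero (P - Q) hD (fun b => by
    rw [map_sub, h b, sub_self])
  exact sub_eq_zero.mp this
end

section
/- Let R be a commutative ring and n : ℕ. For every P in MvPolynomial (Fin n) R there exists a unique multilinear polynomial Q in MvPolynomial (Fin n) R such that P - Q lies in the ideal I generated by {X i ^ 2 - X i : i ∈ Fin n}. -/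
open MvPolynomial

section Aux

variable {R : Type*} [CommRing R] {n : ℕ}

local notation "I" => Ideal.span (Set.range fun i : Fin n =>
        (X i : MvPolynomial (Fin n) R) ^ 2 - X i)

lemma aux_eval_indicator_mem (S : Finset (Fin n)) {q : MvPolynomial (Fin n) R}
    (hq : q ∈ I) :
    eval (fun i => if i ∈ S then (1 : R) else 0) q = 0 := by
  set f : MvPolynomial (Fin n) R →+* R := (eval fun i => if i ∈ S then (1 : R) else 0)
  have : I ≤ RingHom.ker f := by
    rw [Ideal.span_le]
    rintro _ ⟨i, rfl⟩
    simp only [SetLike.mem_coe, RingHom.mem_ker, map_sub, map_pow, f, eval_X]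
    by_cases h : i ∈ S <;> simp [h]
  exact this hq

lemma aux_eval_indicator (S : Finset (Fin n)) (q : MvPolynomial (Fin n) R) :
    eval (fun i => if i ∈ S then (1 : R) else 0) q
      = ∑ m ∈ q.support, if m.support ⊆ S then q.coeff m else 0 := by
  conv_lhs => rw [q.as_sum]
  rw [map_sum]
  refine Finset.sum_congr rfl fun m _ => ?_
  rw [eval_monomial]
  by_cases h : m.support ⊆ S
  · rw [if_pos h]
    have : (m.prod fun i e => (if i ∈ S then (1:R) else 0) ^ e) = 1 := by
      apply Finset.prod_eq_one
      intro i hi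
      show (if i ∈ S then (1:R) else 0) ^ m i = 1
      rw [if_pos (h hi), one_pow]
    rw [this, mul_one]
  · rw [if_neg h]
    obtain ⟨i, hi, hiS⟩ := Finset.not_subset.mp h
    have : (m.prod fun i e => (if i ∈ S then (1:R) else 0) ^ e) = 0 := by
      apply Finset.prod_eq_zero hi
      show (if i ∈ S then (1:R) else 0) ^ m i = 0
      rw [if_neg hiS, zero_pow (Finsupp.mem_support_iff.mp hi)]
    rw [this, mul_zero]

lemma multilinear_mem_eq_zero {q : MvPolynomial (Fin n) R} (hml : Multilinear q)
    (hq : q ∈ I) : q = 0 := by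
  by_contra h0
  have hne : q.support.Nonempty := MvPolynomial.support_nonempty.mpr h0
  obtain ⟨m, hm, hmin⟩ := Finset.exists_minimal hne
  have key := aux_eval_indicator m.support q
  rw [aux_eval_indicator_mem _ hq] at key
  have hsum : ∑ m' ∈ q.support, (if m'.support ⊆ m.support then q.coeff m' else 0)
      = if m.support ⊆ m.support then q.coeff m else 0 := by
    apply Finset.sum_eq_single_of_mem m hm
    intro m' hm' hne'
    rw [if_neg]
    intro hsub
    have hle : m' ≤ m := by
      refine Finsupp.le_def.mpr fun i => ?_
      by_cases hi : i ∈ m'.support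
      · have h1 : m' i ≤ 1 := hml m' hm' i
        have h2 : m i ≠ 0 := Finsupp.mem_support_iff.mp (hsub hi)
        omega
      · simp [Finsupp.notMem_support_iff.mp hi]
    exact hne' (le_antisymm hle (hmin hm' hle))
  rw [hsum, if_pos (subset_refl _)] at key
  exact MvPolynomial.mem_support_iff.mp hm key.symm

end Aux

theorem exists_unique_multilinear_representative (R : Type*) [CommRing R] (n : ℕ)
    (P : MvPolynomial (Fin n) R) :
    ∃! Q : MvPolynomial (Fin n) R, Multilinear Q ∧
      P - Q ∈ Ideal.span (Set.range fun i : Fin n =>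
        (X i : MvPolynomial (Fin n) R) ^ 2 - X i) := by
  set I : Ideal (MvPolynomial (Fin n) R) := Ideal.span (Set.range fun i : Fin n =>
        (X i : MvPolynomial (Fin n) R) ^ 2 - X i) with hI
  -- truncation
  set t : ((Fin n) →₀ ℕ) → ((Fin n) →₀ ℕ) := fun m => m.mapRange (min · 1) rfl with ht
  have ht_apply : ∀ m i, t m i = min (m i) 1 := fun m i => Finsupp.mapRange_apply
  set Q : MvPolynomial (Fin n) R :=
    ∑ m ∈ P.support, monomial (t m) (P.coeff m) with hQ
  have hQml : Multilinear Q := by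
    intro m hm i
    have := MvPolynomial.support_sum hm
    obtain ⟨m', _, hm'⟩ := Finset.mem_biUnion.mp this
    have := MvPolynomial.support_monomial_subset hm'
    rw [Finset.mem_singleton] at this
    subst this
    rw [ht_apply]
    exact min_le_right _ _
  have hmk : ∀ m : (Fin n) →₀ ℕ, ∀ c : R,
      Ideal.Quotient.mk I (monomial m c) = Ideal.Quotient.mk I (monomial (t m) c) := by
    intro m c
    have he : ∀ i : Fin n, IsIdempotentElem (Ideal.Quotient.mk I (X i)) := by
      intro i
      have h0 : Ideal.Quotient.mk I ((X i : MvPolynomial (Fin n) R) ^ 2 - X i) = 0 := by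
        rw [Ideal.Quotient.eq_zero_iff_mem]
        exact Ideal.subset_span ⟨i, rfl⟩
      unfold IsIdempotentElem
      rw [← map_mul, ← sq]
      rwa [map_sub, sub_eq_zero] at h0
    have hsupp : (t m).support ⊆ m.support := Finsupp.support_mapRange
    rw [monomial_eq, monomial_eq, map_mul, map_mul]
    congr 1
    rw [Finsupp.prod, Finsupp.prod, map_prod, map_prod]
    rw [Finset.prod_subset hsupp (fun i _ hi => by
      show Ideal.Quotient.mk I (X i ^ (t m) i) = 1
      rw [Finsupp.notMem_support_iff.mp hi, pow_zero, map_one])]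
    refine Finset.prod_congr rfl fun i hi => ?_
    show Ideal.Quotient.mk I (X i ^ m i) = Ideal.Quotient.mk I (X i ^ (t m) i)
    have h1 : m i ≠ 0 := Finsupp.mem_support_iff.mp hi
    have h2 : t m i = 1 := by rw [ht_apply]; omega
    rw [map_pow, map_pow, h2, pow_one,
      ← Nat.succ_pred_eq_of_pos (Nat.pos_of_ne_zero h1)]
    exact IsIdempotentElem.pow_succ_eq _ (he i)
  have hPQ : P - Q ∈ I := by
    rw [← Ideal.Quotient.eq]
    conv_lhs => rw [P.as_sum]
    rw [hQ, map_sum, map_sum]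
    exact Finset.sum_congr rfl fun m _ => hmk m (P.coeff m)
  refine ⟨Q, ⟨hQml, hPQ⟩, ?_⟩
  rintro Q' ⟨hQ'ml, hPQ'⟩
  have hmem : Q' - Q ∈ I := by
    have := I.sub_mem hPQ hPQ'
    simpa using this
  have hml : Multilinear (Q' - Q) := by
    intro m hm i
    rw [MvPolynomial.mem_support_iff] at hm
    by_cases h1 : m ∈ Q'.support
    · exact hQ'ml m h1 i
    · by_cases h2 : m ∈ Q.support
      · exact hQml m h2 i
      · exfalso
        rw [MvPolynomial.notMem_support_iff] at h1 h2
        apply hm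
        rw [MvPolynomial.coeff_sub, h1, h2, sub_zero]
  have hz := multilinear_mem_eq_zero hml hmem
  rwa [sub_eq_zero] at hz
end

section
/- Let R be a commutative ring, n : ℕ, and let P in MvPolynomial (Fin n) R be multilinear. Then for every T : Finset (Fin n), applying the partial derivative operators pderiv i for all i ∈ T to P (in any order) and then evaluating at the zero point yields the coefficient in P of the squarefree monomial ∏_{i ∈ T} X i. -/
open MvPolynomial

lemma coeff_pderiv' {R : Type*} [CommRing R] {σ : Type*} [DecidableEq σ]
    (i : σ) (m : σ →₀ ℕ) (p : MvPolynomial σ R) :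
    MvPolynomial.coeff m (MvPolynomial.pderiv i p)
      = (m i + 1) * MvPolynomial.coeff (m + Finsupp.single i 1) p := by
  induction p using MvPolynomial.induction_on' with
  | monomial s a =>
    rw [pderiv_monomial, coeff_monomial, coeff_monomial]
    rcases Nat.eq_zero_or_pos (s i) with h | h
    · have h1 : s - Finsupp.single i 1 = s := by
        ext j
        rcases eq_or_ne j i with rfl | hj
        · simp [h]
        · simp [Finsupp.single_apply, hj.symm]
      rw [h1]
      have h2 : s ≠ m + Finsupp.single i 1 := by
        intro he
        apply absurd h
        simp [he]
      rw [if_neg h2]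
      split_ifs with h3
      · subst h3; simp [h]
      · ring
    · have hle : Finsupp.single i 1 ≤ s := by
        rw [Finsupp.single_le_iff]; omega
      have key : s - Finsupp.single i 1 = m ↔ s = m + Finsupp.single i 1 := by
        rw [tsub_eq_iff_eq_add_of_le hle, add_comm]
      by_cases h3 : s = m + Finsupp.single i 1
      · rw [if_pos (key.mpr h3), if_pos h3]
        have : s i = m i + 1 := by subst h3; simp
        rw [this]; push_cast; ring
      · rw [if_neg (fun he => h3 (key.mp he)), if_neg h3, mul_zero]
  | add p q hp hq =>
    simp only [map_add, MvPolynomial.coeff_add, hp, hq]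
    ring

lemma foldr_pderiv_coeff {R : Type*} [CommRing R] {n : ℕ}
    (l : List (Fin n)) (hnd : l.Nodup) (m : Fin n →₀ ℕ) (hm : ∀ i ∈ l, m i = 0)
    (P : MvPolynomial (Fin n) R) :
    MvPolynomial.coeff m (l.foldr (fun i Q => MvPolynomial.pderiv i Q) P)
      = MvPolynomial.coeff (m + (l.map (fun i => Finsupp.single i 1)).sum) P := by
  induction l generalizing m with
  | nil => simp
  | cons i t ih =>
    simp only [List.foldr_cons, List.map_cons, List.sum_cons]
    rw [coeff_pderiv', hm i (by simp)]
    simp only [Nat.cast_zero, zero_add, one_mul]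
    rw [ih (List.nodup_cons.mp hnd).2 (m + Finsupp.single i 1) ?_]
    · congr 1
      ext j
      simp only [Finsupp.add_apply]
      ring
    · intro j hj
      have hij : i ≠ j := fun he => (List.nodup_cons.mp hnd).1 (he ▸ hj)
      simp [hm j (List.mem_cons_of_mem _ hj), Finsupp.single_apply, hij]

theorem pderiv_eval_zero_eq_coeff (R : Type*) [CommRing R] (n : ℕ)
    (P : MvPolynomial (Fin n) R) (hP : Multilinear P) (T : Finset (Fin n))
    (l : List (Fin n)) (hnd : l.Nodup) (hl : l.toFinset = T) :
    MvPolynomial.eval (fun _ => (0 : R))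
        (l.foldr (fun i Q => MvPolynomial.pderiv i Q) P)
      = MvPolynomial.coeff (∑ i ∈ T, Finsupp.single i 1) P := by
  rw [MvPolynomial.eval_zero']
  rw [show (MvPolynomial.constantCoeff
      (l.foldr (fun i Q => MvPolynomial.pderiv i Q) P)) =
      MvPolynomial.coeff 0 (l.foldr (fun i Q => MvPolynomial.pderiv i Q) P) from rfl]
  rw [foldr_pderiv_coeff l hnd 0 (fun _ _ => rfl) P, zero_add]
  rw [← hl, List.sum_toFinset _ hnd]
end

section
/- Let n t : ℕ. Then in MvPolynomial (Fin n) ℤ the polynomial t! • esymm (Fin n) ℤ t - ∏_{j = 0}^{t-1} (psum 1 - C j) lies in the ideal I generated by {X i ^ 2 - X i : i ∈ Fin n}. Equivalently, modulo I the elementary symmetric polynomial e_t is congruent to the falling-factorial polynomial (1/t!)·∏_{j<t}((∑_i X i) - j) in the single linear functional ∑_i X i. -/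
open MvPolynomial Finset

private lemma step_lemma {R : Type*} [CommRing R] {n : ℕ} (x : Fin n → R)
    (hx : ∀ i, x i ^ 2 = x i) (t : ℕ) :
    (∑ A ∈ Finset.univ.powersetCard t, ∏ i ∈ A, x i) * ((∑ i, x i) - (t : R)) =
      (t + 1 : ℕ) • ∑ A ∈ Finset.univ.powersetCard (t + 1), ∏ i ∈ A, x i := by
  have h1 : ∀ A ∈ Finset.univ.powersetCard t,
      (∏ i ∈ A, x i) * (∑ i, x i)
        = (t : R) * ∏ i ∈ A, x i + ∑ i ∈ Aᶜ, ∏ j ∈ insert i A, x j := by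
    intro A hA
    have hcard : A.card = t := (Finset.mem_powersetCard_univ.mp hA)
    rw [Finset.mul_sum, ← Finset.sum_add_sum_compl A]
    congr 1
    · rw [Finset.sum_congr rfl (fun i hi => ?_), Finset.sum_const, hcard,
        nsmul_eq_mul]
      · rw [← Finset.prod_erase_mul A x hi]
        have := hx i
        ring_nf
        rw [hx i]
    · refine Finset.sum_congr rfl fun i hi => ?_
      rw [Finset.prod_insert (Finset.mem_compl.mp hi), mul_comm]
  have h2 : ∑ A ∈ Finset.univ.powersetCard t, ∑ i ∈ Aᶜ, ∏ j ∈ insert i A, x j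
      = ∑ A ∈ Finset.univ.powersetCard (t + 1), ∑ i ∈ A, ∏ j ∈ A, x j := by
    rw [Finset.sum_sigma', Finset.sum_sigma']
    refine Finset.sum_nbij' (fun p => ⟨insert p.2 p.1, p.2⟩)
      (fun p => ⟨p.1.erase p.2, p.2⟩) ?_ ?_ ?_ ?_ ?_
    · rintro ⟨A, i⟩ hp
      simp only [Finset.mem_sigma, Finset.mem_powersetCard_univ] at hp ⊢
      have hiA : i ∉ A := Finset.mem_compl.mp hp.2
      exact ⟨by rw [Finset.card_insert_of_notMem hiA, hp.1],
        Finset.mem_insert_self _ _⟩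
    · rintro ⟨A, i⟩ hp
      simp only [Finset.mem_sigma, Finset.mem_powersetCard_univ] at hp ⊢
      refine ⟨by rw [Finset.card_erase_of_mem hp.2, hp.1]; rfl,
        Finset.mem_compl.mpr (Finset.notMem_erase _ _)⟩
    · rintro ⟨A, i⟩ hp
      simp only [Finset.mem_sigma, Finset.mem_powersetCard_univ] at hp
      have hiA : i ∉ A := Finset.mem_compl.mp hp.2
      simp [Finset.erase_insert hiA]
    · rintro ⟨A, i⟩ hp
      simp only [Finset.mem_sigma, Finset.mem_powersetCard_univ] at hp
      simp [Finset.insert_erase hp.2]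
    · rintro ⟨A, i⟩ hp
      rfl
  have h3 : ∑ A ∈ Finset.univ.powersetCard (t + 1), ∑ i ∈ A, ∏ j ∈ A, x j
      = (t + 1 : ℕ) • ∑ A ∈ Finset.univ.powersetCard (t + 1), ∏ i ∈ A, x i := by
    rw [Finset.smul_sum]
    refine Finset.sum_congr rfl fun A hA => ?_
    rw [Finset.sum_const, Finset.mem_powersetCard_univ.mp hA]
  rw [mul_sub, Finset.sum_mul, Finset.sum_congr rfl h1, Finset.sum_add_distrib,
    h2, h3, ← Finset.mul_sum, mul_comm (t : R)]
  ring

private lemma main_lemma {R : Type*} [CommRing R] {n : ℕ} (x : Fin n → R)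
    (hx : ∀ i, x i ^ 2 = x i) (t : ℕ) :
    t.factorial • ∑ A ∈ Finset.univ.powersetCard t, ∏ i ∈ A, x i =
      ∏ j ∈ Finset.range t, ((∑ i, x i) - (j : R)) := by
  induction t with
  | zero => simp
  | succ t ih =>
    rw [Finset.prod_range_succ, ← ih, Nat.factorial_succ, smul_mul_assoc,
      step_lemma x hx t, smul_smul, mul_comm (t + 1)]

theorem factorial_smul_esymm_sub_falling_factorial_mem_span (n t : ℕ) :
    t.factorial • MvPolynomial.esymm (Fin n) ℤ t -
      ∏ j ∈ Finset.range t, (MvPolynomial.psum (Fin n) ℤ 1 - C (j : ℤ)) ∈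
      Ideal.span (Set.range fun i : Fin n =>
        (X i : MvPolynomial (Fin n) ℤ) ^ 2 - X i) := by
  set I := Ideal.span (Set.range fun i : Fin n =>
    (X i : MvPolynomial (Fin n) ℤ) ^ 2 - X i)
  rw [← Ideal.Quotient.eq]
  set φ := Ideal.Quotient.mk I
  have hx : ∀ i : Fin n, φ (X i) ^ 2 = φ (X i) := by
    intro i
    have : φ (X i ^ 2 - X i) = 0 := Ideal.Quotient.eq_zero_iff_mem.mpr
      (Ideal.subset_span ⟨i, rfl⟩)
    rw [map_sub, map_pow, sub_eq_zero] at this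
    exact this
  have := main_lemma (fun i => φ (X i)) hx t
  calc φ (t.factorial • MvPolynomial.esymm (Fin n) ℤ t)
      = t.factorial • ∑ A ∈ Finset.univ.powersetCard t, ∏ i ∈ A, φ (X i) := by
        rw [map_nsmul, MvPolynomial.esymm, map_sum]
        simp only [map_prod]
    _ = ∏ j ∈ Finset.range t, ((∑ i, φ (X i)) - (j : _)) := this
    _ = φ (∏ j ∈ Finset.range t, (MvPolynomial.psum (Fin n) ℤ 1 - C (j : ℤ))) := by
        rw [map_prod]
        refine Finset.prod_congr rfl fun j _ => ?_
        rw [map_sub, MvPolynomial.psum_one, map_sum]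
        simp
end

section
/- Let n : ℕ and let P in MvPolynomial (Fin n) ℚ be symmetric, i.e., invariant under renaming the variables by every permutation σ : Equiv.Perm (Fin n). Then there exists a univariate polynomial q : Polynomial ℚ with natDegree q ≤ n such that P - (the result of substituting the linear functional ∑_{i : Fin n} X i for the variable of q) lies in the ideal I generated by {X i ^ 2 - X i : i ∈ Fin n}. -/
open Finset
open MvPolynomial

lemma idem_pow {A : Type*} [Monoid A] {a : A} (h : a * a = a) : ∀ {k : ℕ}, k ≠ 0 → a ^ k = a := by
  intro k hk
  induction k with
  | zero => simp at hk
  | succ m ih =>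
    cases m with
    | zero => simp
    | succ l => rw [pow_succ, ih (by simp), h]

lemma esymm_rec {n : ℕ} {A : Type*} [CommRing A] (x : Fin n → A)
    (hx : ∀ i, x i * x i = x i) (k : ℕ) :
    (∑ i, x i) * (∑ S ∈ powersetCard k (univ : Finset (Fin n)), ∏ i ∈ S, x i)
      = k • (∑ S ∈ powersetCard k (univ : Finset (Fin n)), ∏ i ∈ S, x i)
        + (k+1) • (∑ S ∈ powersetCard (k+1) (univ : Finset (Fin n)), ∏ i ∈ S, x i) := by
  rw [Finset.mul_sum]
  have step : ∀ S ∈ powersetCard k (univ : Finset (Fin n)),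
      (∑ i, x i) * ∏ i ∈ S, x i
        = k • (∏ i ∈ S, x i) + ∑ i ∈ Sᶜ, ∏ j ∈ insert i S, x j := by
    intro S hS
    obtain ⟨-, hcard⟩ := mem_powersetCard.mp hS
    rw [Finset.sum_mul, ← Finset.sum_add_sum_compl S]
    congr 1
    · rw [← hcard, ← Finset.sum_const]
      refine Finset.sum_congr rfl fun i hi => ?_
      calc x i * ∏ j ∈ S, x j = x i * (x i * ∏ j ∈ S.erase i, x j) := by
            rw [Finset.mul_prod_erase _ _ hi]
        _ = (x i * x i) * ∏ j ∈ S.erase i, x j := by ring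
        _ = x i * ∏ j ∈ S.erase i, x j := by rw [hx]
        _ = ∏ j ∈ S, x j := Finset.mul_prod_erase _ _ hi
    · refine Finset.sum_congr rfl fun i hi => ?_
      rw [Finset.prod_insert (by simpa using (Finset.mem_compl.mp hi))]
  rw [Finset.sum_congr rfl step, Finset.sum_add_distrib, ← Finset.smul_sum]
  congr 1
  have rhs : ((k+1) • ∑ S ∈ powersetCard (k+1) (univ : Finset (Fin n)), ∏ i ∈ S, x i)
      = ∑ p ∈ (powersetCard (k+1) (univ : Finset (Fin n))).sigma (fun T => T),
          ∏ j ∈ p.1, x j := by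
    rw [Finset.smul_sum, Finset.sum_sigma]
    refine Finset.sum_congr rfl fun T hT => ?_
    obtain ⟨-, hcard⟩ := mem_powersetCard.mp hT
    simp [hcard]
  rw [rhs, Finset.sum_sigma']
  refine Finset.sum_nbij' (fun p => ⟨insert p.2 p.1, p.2⟩) (fun p => ⟨p.1.erase p.2, p.2⟩)
    ?_ ?_ ?_ ?_ ?_
  · rintro ⟨S, i⟩ hp
    simp only [Finset.mem_sigma, mem_powersetCard] at hp ⊢
    obtain ⟨⟨-, hcard⟩, hi⟩ := hp
    have hiS : i ∉ S := by simpa using hi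
    exact ⟨⟨Finset.subset_univ _, by rw [Finset.card_insert_of_notMem hiS, hcard]⟩,
      Finset.mem_insert_self _ _⟩
  · rintro ⟨T, i⟩ hp
    simp only [Finset.mem_sigma, mem_powersetCard] at hp ⊢
    obtain ⟨⟨-, hcard⟩, hi⟩ := hp
    exact ⟨⟨Finset.subset_univ _, by rw [Finset.card_erase_of_mem hi, hcard]; rfl⟩,
      by simp⟩
  · rintro ⟨S, i⟩ hp
    simp only [Finset.mem_sigma, mem_powersetCard] at hp
    have hiS : i ∉ S := by simpa using hp.2
    simp [Finset.erase_insert hiS]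
  · rintro ⟨T, i⟩ hp
    simp only [Finset.mem_sigma, mem_powersetCard] at hp
    simp [Finset.insert_erase hp.2]
  · rintro ⟨S, i⟩ hp
    rfl

lemma esymm_prod {n : ℕ} {A : Type*} [CommRing A] (x : Fin n → A)
    (hx : ∀ i, x i * x i = x i) (k : ℕ) :
    (k.factorial : A) *
        (∑ S ∈ powersetCard k (univ : Finset (Fin n)), ∏ i ∈ S, x i)
      = ∏ j ∈ Finset.range k, ((∑ i, x i) - (j : A)) := by
  induction k with
  | zero => simp
  | succ m ih =>
    rw [Finset.prod_range_succ, ← ih]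
    have hrec := esymm_rec x hx m
    set Em := ∑ S ∈ powersetCard m (univ : Finset (Fin n)), ∏ i ∈ S, x i with hEm
    set Em1 := ∑ S ∈ powersetCard (m+1) (univ : Finset (Fin n)), ∏ i ∈ S, x i with hEm1
    have h1 : (∑ i, x i) * Em - (m : A) * Em = ((m:A)+1) * Em1 := by
      rw [hrec]
      push_cast [nsmul_eq_mul]
      ring
    calc ((m+1).factorial : A) * Em1 = (m.factorial : A) * (((m:A)+1) * Em1) := by
          push_cast [Nat.factorial_succ]; ring
      _ = (m.factorial : A) * ((∑ i, x i) * Em - (m:A)*Em) := by rw [h1]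
      _ = (m.factorial : A) * Em * ((∑ i, x i) - (m:A)) := by ring

lemma exists_perm_image {α : Type*} [Fintype α] [DecidableEq α] {S T : Finset α}
    (h : S.card = T.card) : ∃ σ : Equiv.Perm α, S.image σ = T := by
  have hc : (Sᶜ).card = (Tᶜ).card := by simp [Finset.card_compl, h]
  let e1 : ↥S ≃ ↥T := Finset.equivOfCardEq h
  let e2 : {a // ¬ a ∈ S} ≃ {a // ¬ a ∈ T} :=
    ((Equiv.subtypeEquivRight fun a => (Finset.mem_compl (s := S)).symm).trans
      (Finset.equivOfCardEq hc)).trans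
      (Equiv.subtypeEquivRight fun a => Finset.mem_compl)
  let σ : Equiv.Perm α :=
    (Equiv.sumCompl (· ∈ S)).symm.trans ((e1.sumCongr e2).trans (Equiv.sumCompl (· ∈ T)))
  refine ⟨σ, Finset.eq_of_subset_of_card_le ?_ ?_⟩
  · intro b hb
    obtain ⟨a, ha, rfl⟩ := Finset.mem_image.mp hb
    have : σ a = ↑(e1 ⟨a, ha⟩) := by
      simp only [σ, Equiv.trans_apply, Equiv.sumCompl_symm_apply_of_pos (p := (· ∈ S)) ha,
        Equiv.sumCongr_apply, Sum.map_inl, Equiv.sumCompl_apply_inl]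
    rw [this]
    exact (e1 ⟨a, ha⟩).2
  · rw [Finset.card_image_of_injective _ σ.injective, h]

theorem symmetric_congruent_univariate_in_linear_functional (n : ℕ)
    (P : MvPolynomial (Fin n) ℚ)
    (hP : ∀ σ : Equiv.Perm (Fin n), MvPolynomial.rename σ P = P) :
    ∃ q : Polynomial ℚ, q.natDegree ≤ n ∧
      P - Polynomial.aeval (∑ i : Fin n, (X i : MvPolynomial (Fin n) ℚ)) q ∈
        Ideal.span (Set.range fun i : Fin n =>
          (X i : MvPolynomial (Fin n) ℚ) ^ 2 - X i) := by
  classical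
  let R := MvPolynomial (Fin n) ℚ
  set I : Ideal R := Ideal.span (Set.range fun i : Fin n => (X i : R) ^ 2 - X i) with hI
  let π : R →ₐ[ℚ] R ⧸ I := Ideal.Quotient.mkₐ ℚ I
  let A := R ⧸ I
  let x : Fin n → A := fun i => π (X i)
  have hx : ∀ i, x i * x i = x i := by
    intro i
    have hmem : (X i : R) ^ 2 - X i ∈ I := Ideal.subset_span ⟨i, rfl⟩
    have : π ((X i : R) ^ 2 - X i) = 0 := by
      simpa [π, Ideal.Quotient.mkₐ_eq_mk] using (Ideal.Quotient.eq_zero_iff_mem).mpr hmem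
    have h2 := sub_eq_zero.mp ((by simpa [map_sub, map_pow] using this) : x i ^ 2 - x i = 0)
    simpa [pow_two] using h2
  -- coefficients grouped by support
  set c : Finset (Fin n) → ℚ :=
    fun S => ∑ α ∈ P.support.filter (fun α => α.support = S), P.coeff α with hc
  -- Step A : image of P in the quotient
  have hπmono : ∀ α : Fin n →₀ ℕ, α ∈ P.support →
      π (monomial α (P.coeff α)) = algebraMap ℚ A (P.coeff α) * ∏ i ∈ α.support, x i := by
    intro α hα
    rw [monomial_eq, map_mul]
    have h1 : π (C (P.coeff α) : R) = algebraMap ℚ A (P.coeff α) := π.commutes _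
    have h2 : π (α.prod fun i e => (X i : R) ^ e) = ∏ i ∈ α.support, x i := by
      rw [Finsupp.prod, map_prod]
      refine Finset.prod_congr rfl fun i hi => ?_
      rw [map_pow]
      exact idem_pow (hx i) (Finsupp.mem_support_iff.mp hi)
    rw [h1, h2]
  have stepA : π P = ∑ S : Finset (Fin n), algebraMap ℚ A (c S) * ∏ i ∈ S, x i := by
    conv_lhs => rw [MvPolynomial.as_sum P]
    rw [map_sum, Finset.sum_congr rfl hπmono, ← Finset.sum_fiberwise P.support
      (fun α => α.support) (fun α => algebraMap ℚ A (P.coeff α) * ∏ i ∈ α.support, x i)]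
    refine Finset.sum_congr rfl fun S _ => ?_
    rw [hc, map_sum, Finset.sum_mul]
    refine Finset.sum_congr rfl fun α hα => ?_
    rw [(Finset.mem_filter.mp hα).2]
  -- invariance of coefficients
  have hcoeff : ∀ (σ : Equiv.Perm (Fin n)) (α : Fin n →₀ ℕ),
      P.coeff (Finsupp.mapDomain (⇑σ) α) = P.coeff α := by
    intro σ α
    have := coeff_rename_mapDomain (⇑σ) σ.injective P α
    rwa [hP σ] at this
  have hmapmem : ∀ (σ : Equiv.Perm (Fin n)) (T : Finset (Fin n)) (α : Fin n →₀ ℕ),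
      α ∈ P.support.filter (fun β => β.support = T) →
      Finsupp.mapDomain (⇑σ) α ∈ P.support.filter (fun β => β.support = T.image σ) := by
    intro σ T α hα
    obtain ⟨hαs, hαsupp⟩ := Finset.mem_filter.mp hα
    refine Finset.mem_filter.mpr ⟨?_, ?_⟩
    · rw [MvPolynomial.mem_support_iff, hcoeff σ α]
      exact MvPolynomial.mem_support_iff.mp hαs
    · rw [Finsupp.mapDomain_support_of_injective σ.injective, hαsupp]
  have hmapinv : ∀ (σ : Equiv.Perm (Fin n)) (α : Fin n →₀ ℕ),
      Finsupp.mapDomain (⇑σ.symm) (Finsupp.mapDomain (⇑σ) α) = α := by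
    intro σ α
    rw [← Finsupp.mapDomain_comp]
    simpa using Finsupp.mapDomain_id
  have stepB : ∀ (σ : Equiv.Perm (Fin n)) (S : Finset (Fin n)), c (S.image σ) = c S := by
    intro σ S
    rw [hc]
    refine (Finset.sum_nbij' (fun α => Finsupp.mapDomain (⇑σ) α)
      (fun α => Finsupp.mapDomain (⇑σ.symm) α) (hmapmem σ S) ?_ ?_ ?_ ?_).symm
    · intro α hα
      have := hmapmem σ.symm (S.image σ) α hα
      rwa [show (S.image ⇑σ).image ⇑σ.symm = S by
        rw [Finset.image_image]; simp] at this
    · intro α hα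
      exact hmapinv σ α
    · intro α hα
      show Finsupp.mapDomain (⇑σ) (Finsupp.mapDomain (⇑σ.symm) α) = α
      have := hmapinv σ.symm α
      simp only [Equiv.symm_symm] at this; exact this
    · intro α hα
      exact (hcoeff σ α).symm
  -- constancy on cardinality classes
  have hconst : ∀ k : ℕ, ∀ S ∈ powersetCard k (univ : Finset (Fin n)),
      ∀ T ∈ powersetCard k (univ : Finset (Fin n)), c S = c T := by
    intro k S hS T hT
    have hcard : S.card = T.card := by
      rw [(mem_powersetCard.mp hS).2, (mem_powersetCard.mp hT).2]
    obtain ⟨σ, hσ⟩ := exists_perm_image hcard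
    rw [← hσ]
    exact (stepB σ S).symm
  set d : ℕ → ℚ := fun k => (∑ S ∈ powersetCard k (univ : Finset (Fin n)), c S) / (n.choose k)
    with hdd
  have hd : ∀ k ∈ Finset.range (n+1), ∀ S ∈ powersetCard k (univ : Finset (Fin n)),
      c S = d k := by
    intro k hk S hS
    have hsum : ∑ T ∈ powersetCard k (univ : Finset (Fin n)), c T = (n.choose k : ℚ) * c S := by
      rw [Finset.sum_congr rfl (fun T hT => hconst k T hT S hS), Finset.sum_const,
        Finset.card_powersetCard, Finset.card_univ, Fintype.card_fin, nsmul_eq_mul]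
    have hch : (n.choose k : ℚ) ≠ 0 := by
      exact_mod_cast (Nat.choose_pos (Nat.lt_succ_iff.mp (Finset.mem_range.mp hk))).ne'
    rw [hdd]
    simp only []
    rw [hsum, mul_div_cancel_left₀ _ hch]
  have hπP2 : π P = ∑ k ∈ Finset.range (n+1), algebraMap ℚ A (d k) *
      ∑ S ∈ powersetCard k (univ : Finset (Fin n)), ∏ i ∈ S, x i := by
    rw [stepA, ← Finset.powerset_univ, Finset.sum_powerset,
      Finset.card_univ, Fintype.card_fin]
    refine Finset.sum_congr rfl fun k hk => ?_
    rw [Finset.mul_sum]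
    refine Finset.sum_congr rfl fun S hS => ?_
    rw [hd k hk S hS]
  -- the univariate polynomial
  set q : Polynomial ℚ := ∑ k ∈ Finset.range (n+1),
    Polynomial.C (d k / k.factorial) * ∏ j ∈ Finset.range k,
      (Polynomial.X - Polynomial.C (j : ℚ)) with hq
  refine ⟨q, ?_, ?_⟩
  · refine Polynomial.natDegree_sum_le_of_forall_le _ _ fun k hk => ?_
    calc (Polynomial.C (d k / k.factorial) * ∏ j ∈ Finset.range k,
          (Polynomial.X - Polynomial.C (j : ℚ))).natDegree
        ≤ (∏ j ∈ Finset.range k, (Polynomial.X - Polynomial.C (j : ℚ))).natDegree :=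
          Polynomial.natDegree_C_mul_le _ _
      _ ≤ ∑ j ∈ Finset.range k, (Polynomial.X - Polynomial.C (j : ℚ)).natDegree :=
          Polynomial.natDegree_prod_le _ _
      _ ≤ n := by
          simp only [Polynomial.natDegree_X_sub_C, Finset.sum_const, Finset.card_range,
            smul_eq_mul, mul_one]
          exact Nat.lt_succ_iff.mp (Finset.mem_range.mp hk)
  · have key : π (Polynomial.aeval (∑ i : Fin n, (X i : R)) q) = π P := by
      rw [← Polynomial.aeval_algHom_apply, map_sum, hπP2]
      have hπs : π (∑ i : Fin n, (X i : R)) = ∑ i, x i := by rw [map_sum]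
      rw [hπs]
      refine Finset.sum_congr rfl fun k hk => ?_
      rw [map_mul, Polynomial.aeval_C, map_prod]
      have hterm : ∀ j ∈ Finset.range k,
          Polynomial.aeval (∑ i, x i) (Polynomial.X - Polynomial.C (j : ℚ))
            = (∑ i, x i) - (j : A) := by
        intro j hj
        rw [map_sub, Polynomial.aeval_X, Polynomial.aeval_C, map_natCast]
      rw [Finset.prod_congr rfl hterm, ← esymm_prod x hx k,
        show ((k.factorial : A)) = algebraMap ℚ A (k.factorial : ℚ) by rw [map_natCast],
        ← mul_assoc, ← map_mul, div_mul_cancel₀ _ (by exact_mod_cast k.factorial_ne_zero)]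
    have : π (P - Polynomial.aeval (∑ i : Fin n, (X i : R)) q) = 0 := by
      rw [map_sub, key, sub_self]
    rw [Ideal.Quotient.mkₐ_eq_mk] at this
    exact (Ideal.Quotient.eq_zero_iff_mem).mp this
end

section
/- (Newton's explicit formula for elementary symmetric polynomials.) Let n t : ℕ with 1 ≤ t ≤ n. Then in MvPolynomial (Fin n) ℚ: esymm (Fin n) ℚ t = (-1)^t · ∑ over all tuples (m₁,…,m_t) of natural numbers satisfying m₁ + 2·m₂ + ⋯ + t·m_t = t of ∏_{i=1}^{t} (-(psum i))^{m_i} / (m_i! · i^{m_i}), where the division is by the rational constant m_i! · i^{m_i}. -/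
open MvPolynomial Finset

variable (n t : ℕ)

noncomputable def FF (i : Fin t) (c : ℕ) : MvPolynomial (Fin n) ℚ :=
  C (((c.factorial : ℚ) * ((i.1 + 1 : ℕ) : ℚ) ^ c)⁻¹) *
    (-(MvPolynomial.psum (Fin n) ℚ (i.1 + 1))) ^ c

noncomputable def ff (m : Fin t → ℕ) : MvPolynomial (Fin n) ℚ :=
  ∏ i : Fin t, FF n t i (m i)

def AA (k : ℕ) : Finset (Fin t → ℕ) :=
  (Fintype.piFinset fun _ : Fin t => Finset.range (t + 1)).filter
    (fun m : Fin t → ℕ => ∑ i : Fin t, (i.1 + 1) * m i = k)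

noncomputable def SS (k : ℕ) : MvPolynomial (Fin n) ℚ := ∑ m ∈ AA t k, ff n t m

lemma mem_AA {k : ℕ} (hk : k ≤ t) (m : Fin t → ℕ) :
    m ∈ AA t k ↔ ∑ i : Fin t, (i.1 + 1) * m i = k := by
  simp only [AA, Finset.mem_filter, Fintype.mem_piFinset, Finset.mem_range, and_iff_right_iff_imp]
  intro hs i
  have h1 : (i.1 + 1) * m i ≤ k := hs ▸ Finset.single_le_sum (f := fun i => (i.1+1) * m i)
    (fun _ _ => Nat.zero_le _) (Finset.mem_univ i)
  have : m i ≤ k := le_trans (Nat.le_mul_of_pos_left _ (Nat.succ_pos _)) h1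
  omega

lemma AA_zero : AA t 0 = {fun _ => 0} := by
  ext m
  simp [mem_AA t (Nat.zero_le t), Finset.sum_eq_zero_iff, funext_iff]

lemma SS_zero : SS n t 0 = 1 := by
  simp [SS, AA_zero, ff, FF]

lemma FF_step (i : Fin t) (c : ℕ) :
    ((((i.1 + 1) * (c + 1) : ℕ)) : MvPolynomial (Fin n) ℚ) * FF n t i (c + 1) =
      (-(MvPolynomial.psum (Fin n) ℚ (i.1 + 1))) * FF n t i c := by
  rw [show ((((i.1+1)*(c+1) : ℕ)) : MvPolynomial (Fin n) ℚ)
      = C ((((i.1+1)*(c+1) : ℕ)) : ℚ) from (map_natCast C _).symm]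
  rw [FF, FF, ← mul_assoc, ← C_mul]
  have ha : ((((i.1+1)*(c+1) : ℕ)) : ℚ) ≠ 0 := by positivity
  have hkey : ((((i.1+1)*(c+1) : ℕ)) : ℚ) * (((c+1).factorial : ℚ) * ((i.1 + 1 : ℕ) : ℚ) ^ (c+1))⁻¹
      = ((c.factorial : ℚ) * ((i.1 + 1 : ℕ) : ℚ) ^ c)⁻¹ := by
    have : (((c+1).factorial : ℚ) * ((i.1 + 1 : ℕ) : ℚ) ^ (c+1))
        = ((((i.1+1)*(c+1) : ℕ)) : ℚ) * ((c.factorial : ℚ) * ((i.1 + 1 : ℕ) : ℚ) ^ c) := by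
      rw [Nat.factorial_succ]
      push_cast
      ring
    rw [this, mul_inv, ← mul_assoc, mul_inv_cancel₀ ha, one_mul]
  rw [hkey, pow_succ]
  ring

lemma ff_update (m : Fin t → ℕ) (i : Fin t) :
    ((((i.1 + 1) * (m i + 1) : ℕ)) : MvPolynomial (Fin n) ℚ) *
      ff n t (Function.update m i (m i + 1)) =
    (-(MvPolynomial.psum (Fin n) ℚ (i.1 + 1))) * ff n t m := by
  have h1 : (fun j => FF n t j (Function.update m i (m i + 1) j))
      = Function.update (fun j => FF n t j (m j)) i (FF n t i (m i + 1)) := by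
    funext j
    rcases eq_or_ne j i with rfl | hj
    · simp
    · simp [Function.update_of_ne hj]
  have h2 : ff n t (Function.update m i (m i + 1))
      = FF n t i (m i + 1) * ∏ j ∈ univ \ {i}, FF n t j (m j) := by
    rw [ff]
    calc ∏ j : Fin t, FF n t j (Function.update m i (m i + 1) j)
        = ∏ j : Fin t, Function.update (fun j => FF n t j (m j)) i (FF n t i (m i + 1)) j := by
          rw [h1]
      _ = _ := Finset.prod_update_of_mem (mem_univ i) _ _
  have h3 : ff n t m = FF n t i (m i) * ∏ j ∈ univ \ {i}, FF n t j (m j) := by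
    rw [ff]
    exact Finset.prod_eq_mul_prod_sdiff_singleton_of_mem (mem_univ i) _
  rw [h2, h3, ← mul_assoc, FF_step, mul_assoc]

lemma weight_update (m : Fin t → ℕ) (i : Fin t) (v : ℕ) :
    ∑ j : Fin t, (j.1 + 1) * (Function.update m i v) j
      = (i.1 + 1) * v + ∑ j ∈ univ \ {i}, (j.1 + 1) * m j := by
  have h1 : (fun j : Fin t => (j.1 + 1) * (Function.update m i v) j)
      = Function.update (fun j : Fin t => (j.1 + 1) * m j) i ((i.1 + 1) * v) := by
    funext j
    rcases eq_or_ne j i with rfl | hj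
    · simp
    · simp [Function.update_of_ne hj]
  calc ∑ j : Fin t, (j.1 + 1) * (Function.update m i v) j
      = ∑ j : Fin t, Function.update (fun j : Fin t => (j.1 + 1) * m j) i ((i.1+1)*v) j := by
        rw [h1]
    _ = _ := Finset.sum_update_of_mem (mem_univ i) _ _

lemma weight_split (m : Fin t → ℕ) (i : Fin t) :
    ∑ j : Fin t, (j.1 + 1) * m j
      = (i.1 + 1) * (m i) + ∑ j ∈ univ \ {i}, (j.1 + 1) * m j :=
  Finset.sum_eq_add_sum_sdiff_singleton_of_mem (mem_univ i) _

lemma innerSumAux (k : ℕ) (hk : k ≤ t) (i : Fin t) :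
    ∑ m ∈ AA t k, ((((i.1 + 1) * m i : ℕ)) : MvPolynomial (Fin n) ℚ) * ff n t m =
      if i.1 + 1 ≤ k then
        (-(MvPolynomial.psum (Fin n) ℚ (i.1 + 1))) * SS n t (k - (i.1 + 1)) else 0 := by
  split_ifs with hik
  · have hne : ∀ m ∈ AA t k,
        ((((i.1 + 1) * m i : ℕ)) : MvPolynomial (Fin n) ℚ) * ff n t m ≠ 0 → m i ≠ 0 := by
      intro m _ hterm h0
      apply hterm
      simp [h0]
    rw [← Finset.sum_filter_of_ne hne, SS, Finset.mul_sum]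
    refine Finset.sum_nbij' (fun m => Function.update m i (m i - 1))
      (fun m => Function.update m i (m i + 1)) ?_ ?_ ?_ ?_ ?_
    · intro m hm
      rw [Finset.mem_filter, mem_AA t hk] at hm
      obtain ⟨hs, h0⟩ := hm
      rw [mem_AA t (by omega), weight_update]
      rw [weight_split t m i] at hs
      have hmul : (i.1 + 1) * m i = (i.1 + 1) * (m i - 1) + (i.1 + 1) := by
        rw [← Nat.mul_succ]
        congr 1
        omega
      omega
    · intro m hm
      rw [mem_AA t (by omega)] at hm
      rw [Finset.mem_filter, mem_AA t hk, weight_update]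
      rw [weight_split t m i] at hm
      constructor
      · rw [Nat.mul_succ]
        omega
      · simp
    · intro m hm
      rw [Finset.mem_filter] at hm
      funext j
      rcases eq_or_ne j i with rfl | hj
      · simp
        omega
      · simp [Function.update_of_ne hj]
    · intro m hm
      funext j
      rcases eq_or_ne j i with rfl | hj
      · simp
      · simp [Function.update_of_ne hj]
    · intro m hm
      rw [Finset.mem_filter] at hm
      obtain ⟨hs, h0⟩ := hm
      have heq : Function.update (Function.update m i (m i - 1)) i
          ((Function.update m i (m i - 1)) i + 1) = m := by
        funext j
        rcases eq_or_ne j i with rfl | hj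
        · simp
          omega
        · simp [Function.update_of_ne hj]
      have := ff_update n t (Function.update m i (m i - 1)) i
      rw [heq] at this
      rw [← this]
      congr 2 <;> simp <;> omega
  · apply Finset.sum_eq_zero
    intro m hm
    rw [mem_AA t hk] at hm
    have h1 : (i.1 + 1) * m i ≤ k := hm ▸ Finset.single_le_sum
      (f := fun i => (i.1+1) * m i) (fun _ _ => Nat.zero_le _) (Finset.mem_univ i)
    have h0 : m i = 0 := by
      by_contra h
      have : i.1 + 1 ≤ (i.1 + 1) * m i := Nat.le_mul_of_pos_right _ (Nat.pos_of_ne_zero h)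
      omega
    simp [h0]

lemma SS_rec (k : ℕ) (hk : k ≤ t) :
    (k : MvPolynomial (Fin n) ℚ) * SS n t k
      = ∑ i : Fin t, (if i.1 + 1 ≤ k then
          (-(MvPolynomial.psum (Fin n) ℚ (i.1 + 1))) * SS n t (k - (i.1 + 1)) else 0) := by
  rw [SS, Finset.mul_sum]
  have step : ∀ m ∈ AA t k, (k : MvPolynomial (Fin n) ℚ) * ff n t m
      = ∑ i : Fin t, ((((i.1 + 1) * m i : ℕ)) : MvPolynomial (Fin n) ℚ) * ff n t m := by
    intro m hm
    rw [mem_AA t hk] at hm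
    rw [← hm]
    push_cast
    rw [Finset.sum_mul]
  rw [Finset.sum_congr rfl step, Finset.sum_comm]
  exact Finset.sum_congr rfl fun i _ => innerSumAux n t k hk i

lemma main_ind (k : ℕ) (hk : k ≤ t) :
    MvPolynomial.esymm (Fin n) ℚ k = (-1 : MvPolynomial (Fin n) ℚ) ^ k * SS n t k := by
  induction k using Nat.strong_induction_on with
  | _ k IH =>
  rcases Nat.eq_zero_or_pos k with rfl | hk0
  · simp [SS_zero, MvPolynomial.esymm_zero]
  · have hcast : ((k : ℕ) : MvPolynomial (Fin n) ℚ) ≠ 0 := Nat.cast_ne_zero.mpr hk0.ne'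
    apply mul_left_cancel₀ hcast
    have hrec := SS_rec n t k hk
    have hsum : ∑ i : Fin t, (if i.1 + 1 ≤ k then
        (-(MvPolynomial.psum (Fin n) ℚ (i.1 + 1))) * SS n t (k - (i.1 + 1)) else 0)
        = ∑ j ∈ range k, (-(MvPolynomial.psum (Fin n) ℚ (j + 1))) * SS n t (k - (j + 1)) := by
      rw [Fin.sum_univ_eq_sum_range (fun j => if j + 1 ≤ k then
        (-(MvPolynomial.psum (Fin n) ℚ (j + 1))) * SS n t (k - (j + 1)) else 0) t]
      rw [← Finset.sum_subset (Finset.range_subset_range.mpr hk) (fun x _ hx => by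
        rw [Finset.mem_range] at hx
        rw [if_neg (by omega)])]
      exact Finset.sum_congr rfl fun j hj => if_pos (by
        rw [Finset.mem_range] at hj; omega)
    have hSS : ∀ j ∈ range k, SS n t (k - (j + 1))
        = (-1 : MvPolynomial (Fin n) ℚ) ^ (k - (j + 1)) * MvPolynomial.esymm (Fin n) ℚ (k - (j + 1)) := by
      intro j hj
      rw [Finset.mem_range] at hj
      rw [IH (k - (j + 1)) (by omega) (by omega), ← mul_assoc, ← pow_add,
        Even.neg_one_pow ⟨k - (j + 1), rfl⟩, one_mul]
    calc (k : MvPolynomial (Fin n) ℚ) * MvPolynomial.esymm (Fin n) ℚ k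
        = (-1) ^ (k + 1) * ∑ a ∈ (Finset.HasAntidiagonal.antidiagonal k).filter (fun a => a.1 < k),
            (-1) ^ a.1 * MvPolynomial.esymm (Fin n) ℚ a.1 * MvPolynomial.psum (Fin n) ℚ a.2 :=
          MvPolynomial.mul_esymm_eq_sum (Fin n) ℚ k
      _ = (-1) ^ (k + 1) * ∑ j ∈ range k,
            (-1) ^ j * MvPolynomial.esymm (Fin n) ℚ j * MvPolynomial.psum (Fin n) ℚ (k - j) := by
          rw [Finset.sum_filter, Finset.Nat.sum_antidiagonal_eq_sum_range_succ_mk,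
            Finset.sum_range_succ, if_neg (lt_irrefl k), add_zero]
          congr 1
          exact Finset.sum_congr rfl fun j hj => if_pos (Finset.mem_range.mp hj)
      _ = (-1) ^ (k + 1) * ∑ j ∈ range k,
            (-1) ^ (k - (j + 1)) * MvPolynomial.esymm (Fin n) ℚ (k - (j + 1))
              * MvPolynomial.psum (Fin n) ℚ (j + 1) := by
          congr 1
          rw [← Finset.sum_range_reflect]
          refine Finset.sum_congr rfl fun j hj => ?_
          rw [Finset.mem_range] at hj
          have h2 : k - (k - 1 - j) = j + 1 := by omega
          rw [h2, show k - 1 - j = k - (j + 1) by omega]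
      _ = (-1) ^ k * ∑ j ∈ range k,
            (-(MvPolynomial.psum (Fin n) ℚ (j + 1))) * SS n t (k - (j + 1)) := by
          rw [Finset.mul_sum, Finset.mul_sum]
          refine Finset.sum_congr rfl fun j hj => ?_
          rw [hSS j hj, pow_succ]
          ring
      _ = (k : MvPolynomial (Fin n) ℚ) * ((-1) ^ k * SS n t k) := by
          rw [← hsum, ← hrec]
          ring

theorem newton_explicit_formula_esymm (n t : ℕ) (ht : 1 ≤ t) (htn : t ≤ n) :
    MvPolynomial.esymm (Fin n) ℚ t =
      (-1 : MvPolynomial (Fin n) ℚ) ^ t *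
        ∑ m ∈ (Fintype.piFinset fun _ : Fin t => Finset.range (t + 1)).filter
            (fun m : Fin t → ℕ => ∑ i : Fin t, (i.1 + 1) * m i = t),
          ∏ i : Fin t,
            C ((((m i).factorial : ℚ) * ((i.1 + 1 : ℕ) : ℚ) ^ (m i))⁻¹) *
              (-(MvPolynomial.psum (Fin n) ℚ (i.1 + 1))) ^ (m i) := by
  have := main_ind n t t le_rfl
  simpa [SS, AA, ff, FF] using this
end

section
/- Let R be a commutative ring, n : ℕ, and A : Matrix (Fin n) (Fin n) R. In MvPolynomial (Fin n) R, the coefficient of the full squarefree monomial X 0 · X 1 ⋯ X (n-1) (exponent vector identically 1) in the product ∏_{i : Fin n} (∑_{j : Fin n} C (A i j) * X j) equals the permanent of A, i.e., ∑_{σ : Equiv.Perm (Fin n)} ∏_{i : Fin n} A i (σ i). -/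
open MvPolynomial

theorem coeff_full_squarefree_monomial_eq_permanent (R : Type*) [CommRing R] (n : ℕ)
    (A : Matrix (Fin n) (Fin n) R) :
    MvPolynomial.coeff (∑ j : Fin n, Finsupp.single j 1)
        (∏ i : Fin n, ∑ j : Fin n, C (A i j) * (X j : MvPolynomial (Fin n) R))
      = ∑ σ : Equiv.Perm (Fin n), ∏ i : Fin n, A i (σ i) := by
  classical
  rw [Finset.prod_univ_sum]
  have key : ∀ g : Fin n → Fin n,
      (∏ i, C (A i (g i)) * X (g i) : MvPolynomial (Fin n) R)
        = monomial (∑ i, Finsupp.single (g i) 1) (∏ i, A i (g i)) := by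
    intro g
    simp_rw [C_mul_X_eq_monomial]
    calc (∏ i, monomial (Finsupp.single (g i) 1) (A i (g i)) : MvPolynomial (Fin n) R)
        = ∏ i, C (A i (g i)) * monomial (Finsupp.single (g i) 1) 1 := by
          simp [C_mul_monomial]
      _ = (∏ i, C (A i (g i))) * ∏ i, monomial (Finsupp.single (g i) 1) 1 :=
          Finset.prod_mul_distrib
      _ = C (∏ i, A i (g i)) * ∏ i, monomial (Finsupp.single (g i) 1) 1 := by
          rw [map_prod]
      _ = _ := (monomial_sum_index _ _ _).symm
  simp_rw [key]
  rw [coeff_sum]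
  simp_rw [coeff_monomial]
  have hbij : ∀ g : Fin n → Fin n,
      (∑ i, Finsupp.single (g i) 1 = ∑ j : Fin n, Finsupp.single j (1 : ℕ)) ↔
        Function.Bijective g := by
    intro g
    constructor
    · intro h
      rw [Fintype.bijective_iff_injective_and_card]
      refine ⟨?_, rfl⟩
      intro a b hab
      by_contra hne
      have := congrArg (fun f : Fin n →₀ ℕ => f (g a)) h
      simp only [Finsupp.coe_finset_sum, Finset.sum_apply, Finsupp.single_apply] at this
      rw [Finset.sum_ite_eq' Finset.univ (g a) (fun _ => 1)] at this
      simp only [Finset.mem_univ, if_true] at this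
      have hle : 2 ≤ ∑ i : Fin n, if g i = g a then 1 else 0 := by
        have : ({a, b} : Finset (Fin n)) ⊆ Finset.univ := Finset.subset_univ _
        calc 2 = ∑ i ∈ ({a, b} : Finset (Fin n)), (if g i = g a then 1 else 0) := by
              rw [Finset.sum_pair hne]; simp [hab]
          _ ≤ _ := Finset.sum_le_sum_of_subset_of_nonneg (Finset.subset_univ _)
              (fun _ _ _ => by positivity)
      omega
    · intro h
      exact Fintype.sum_bijective g h _ _ (fun i => rfl)
  rw [Finset.sum_congr rfl (fun g _ => by rw [if_congr (hbij g) rfl rfl])]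
  rw [Finset.sum_ite, Finset.sum_const_zero, add_zero]
  symm
  refine Finset.sum_bij' (fun σ _ => (σ : Fin n → Fin n))
    (fun g hg => Equiv.ofBijective g (Finset.mem_filter.mp hg).2) ?_ ?_ ?_ ?_ ?_
  · intro σ _
    simp only [Finset.mem_filter, Fintype.mem_piFinset, Finset.mem_univ, true_and]
    exact ⟨fun _ => trivial, σ.bijective⟩
  · intro g _
    exact Finset.mem_univ _
  · intro σ _
    exact Equiv.coe_fn_injective rfl
  · intro g _
    rfl
  · intro σ _
    rfl
end

section
/- (Determinant via Grassmann matrix representation.) Let n : ℕ, A : Matrix (Fin n) (Fin n) ℤ, and for m : Fin n define θ_m : Matrix (Fin n → Bool) (Fin n → Bool) ℤ by θ_m a b = (-1)^(card {k : Fin n | k < m ∧ a k = true}) if a m = true, b m = false, and a k = b k for all k ≠ m, and θ_m a b = 0 otherwise. Form the ordered matrix product M := L_0 * L_1 * ⋯ * L_{n-1}, where L_i := ∑_{j : Fin n} (A i j) • θ_j. Then the entry of M at row index (fun _ => true) and column index (fun _ => false) equals det A. -/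
/-- The Jordan–Wigner matrix representation of the `m`-th Grassmann generator:
a matrix indexed by `Fin n → Bool`. -/
def theta (n : ℕ) (m : Fin n) : Matrix (Fin n → Bool) (Fin n → Bool) ℤ :=
  fun a b =>
    if a m = true ∧ b m = false ∧ ∀ k : Fin n, k ≠ m → a k = b k then
      (-1 : ℤ) ^ (Finset.univ.filter (fun k : Fin n => k < m ∧ a k = true)).card
    else 0


open Finset
-- helper 1: erase enumeration
lemma erase_orderEmbOfFin {n m : ℕ} (S : Finset (Fin n)) (h : S.card = m + 1)
    (q : Fin (m + 1)) (h' : (S.erase (S.orderEmbOfFin h q)).card = m) (r : Fin m) :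
    (S.erase (S.orderEmbOfFin h q)).orderEmbOfFin h' r
      = S.orderEmbOfFin h (q.succAbove r) := by
  have := Finset.orderEmbOfFin_unique h'
    (f := fun r : Fin m => S.orderEmbOfFin h (q.succAbove r)) ?_ ?_
  · exact (congrFun this r).symm
  · intro x
    rw [Finset.mem_erase]
    refine ⟨fun hx => (Fin.succAbove_ne q x) ((S.orderEmbOfFin h).injective hx), orderEmbOfFin_mem _ _ _⟩
  · exact (S.orderEmbOfFin h).strictMono.comp (Fin.strictMono_succAbove q)
open Finset
lemma filter_lt_orderEmbOfFin_card {n m : ℕ} (S : Finset (Fin n)) (h : S.card = m)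
    (q : Fin m) :
    (S.filter (fun k => k < S.orderEmbOfFin h q)).card = (q : ℕ) := by
  have himg : (S.filter (fun k => k < S.orderEmbOfFin h q))
      = (Finset.Iio q).image (S.orderEmbOfFin h) := by
    ext x
    simp only [mem_filter, mem_image, mem_Iio]
    constructor
    · rintro ⟨hxS, hlt⟩
      have : x ∈ Set.range (S.orderEmbOfFin h) := by
        rw [Finset.range_orderEmbOfFin]; exact hxS
      obtain ⟨r, rfl⟩ := this
      exact ⟨r, (OrderEmbedding.lt_iff_lt _).mp hlt, rfl⟩
    · rintro ⟨r, hr, rfl⟩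
      exact ⟨orderEmbOfFin_mem _ _ _, (OrderEmbedding.lt_iff_lt _).mpr hr⟩
  rw [himg, Finset.card_image_of_injective _ (S.orderEmbOfFin h).injective, Fin.card_Iio]
open Finset

lemma theta_sum {n : ℕ} (j : Fin n) (a : Fin n → Bool) (g : (Fin n → Bool) → ℤ) :
    ∑ c : Fin n → Bool, theta n j a c * g c =
      if a j = true then
        (-1 : ℤ) ^ (Finset.univ.filter (fun k : Fin n => k < j ∧ a k = true)).card
          * g (Function.update a j false)
      else 0 := by
  by_cases haj : a j = true
  · rw [if_pos haj, Finset.sum_eq_single (Function.update a j false)]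
    · congr 1
      rw [theta, if_pos]
      exact ⟨haj, Function.update_self _ _ _, fun k hk => (Function.update_of_ne hk _ _).symm⟩
    · intro c _ hc
      rw [theta, if_neg, zero_mul]
      rintro ⟨h1, h2, h3⟩
      apply hc; funext k
      by_cases hk : k = j
      · subst hk; simp [h2]
      · rw [Function.update_of_ne hk]; exact (h3 k hk).symm
    · intro hmem; exact absurd (Finset.mem_univ _) hmem
  · rw [if_neg haj]
    apply Finset.sum_eq_zero
    intro c _
    rw [theta, if_neg, zero_mul]
    rintro ⟨h1, -⟩; exact haj h1

lemma update_filter {n : ℕ} (a : Fin n → Bool) (j : Fin n) :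
    (Finset.univ.filter (fun k => Function.update a j false k = true))
      = (Finset.univ.filter (fun k => a k = true)).erase j := by
  ext k
  by_cases hk : k = j
  · subst hk; simp
  · simp [Function.update_of_ne hk, hk]

lemma filter_lt_and {n : ℕ} (a : Fin n → Bool) (j : Fin n) :
    (Finset.univ.filter (fun k : Fin n => k < j ∧ a k = true))
      = (Finset.univ.filter (fun k => a k = true)).filter (fun k => k < j) := by
  rw [Finset.filter_filter]
  simp [and_comm]

lemma orderEmbOfFin_congr {α : Type*} [LinearOrder α] {S T : Finset α} (hST : S = T)
    {k : ℕ} (h1 : S.card = k) (h2 : T.card = k) (q : Fin k) :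
    S.orderEmbOfFin h1 q = T.orderEmbOfFin h2 q := by subst hST; rfl

lemma key {n : ℕ} (A : Matrix (Fin n) (Fin n) ℤ) (l : List (Fin n)) :
    ∀ (a : Fin n → Bool),
    ((l.map (fun i => ∑ j : Fin n, A i j • theta n j)).prod) a (fun _ => false) =
      if h : (Finset.univ.filter (fun k => a k = true)).card = l.length then
        Matrix.det (Matrix.of fun p q : Fin l.length =>
          A (l.get p) ((Finset.univ.filter (fun k => a k = true)).orderEmbOfFin h q))
      else 0 := by
  induction l with
  | nil =>
    intro a
    rw [List.map_nil, List.prod_nil, Matrix.one_apply]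
    by_cases ha : a = fun _ => false
    · subst ha
      rw [if_pos rfl, dif_pos (by simp)]
      exact (Matrix.det_fin_zero).symm
    · rw [if_neg ha, dif_neg]
      simp only [List.length_nil, Finset.card_eq_zero, Finset.filter_eq_empty_iff]
      intro hc
      apply ha; funext k
      simpa using hc (Finset.mem_univ k)
  | cons i t ih =>
    intro a
    set S := Finset.univ.filter (fun k => a k = true) with hSdef
    rw [List.map_cons, List.prod_cons, Matrix.mul_apply]
    have hLent : ∀ c, (∑ j : Fin n, A i j • theta n j) a c = ∑ j : Fin n, A i j * theta n j a c := by
      intro c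
      rw [Matrix.sum_apply]
      simp [Matrix.smul_apply]
    simp only [hLent, Finset.sum_mul]
    rw [Finset.sum_comm]
    have hterm : ∀ j : Fin n,
        (∑ c : Fin n → Bool, A i j * theta n j a c *
          ((t.map (fun i => ∑ j : Fin n, A i j • theta n j)).prod) c (fun _ => false)) =
        if a j = true then A i j *
          ((-1 : ℤ) ^ (Finset.univ.filter (fun k : Fin n => k < j ∧ a k = true)).card
            * ((t.map (fun i => ∑ j : Fin n, A i j • theta n j)).prod)
                (Function.update a j false) (fun _ => false)) else 0 := by
      intro j
      simp only [mul_assoc]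
      rw [← Finset.mul_sum, theta_sum, mul_ite, mul_zero]
    simp only [hterm]
    rw [← Finset.sum_filter, ← hSdef]
    by_cases h : S.card = t.length + 1
    · rw [dif_pos (by simpa using h)]
      have himg : Finset.image (S.orderEmbOfFin h) Finset.univ = S := by
        apply Finset.coe_injective
        rw [Finset.coe_image, Finset.coe_univ, Set.image_univ, Finset.range_orderEmbOfFin]
      conv_lhs => rw [← himg]
      rw [Finset.sum_image (fun x _ y _ hxy => (S.orderEmbOfFin h).injective hxy)]
      rw [Matrix.det_succ_row_zero]
      apply Finset.sum_congr rfl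
      intro q _
      set j := S.orderEmbOfFin h q with hj
      have hFt : ((t.map (fun i => ∑ j : Fin n, A i j • theta n j)).prod)
          (Function.update a j false) (fun _ => false) =
          Matrix.det (Matrix.of fun p r : Fin t.length =>
            A (t.get p) ((S.erase j).orderEmbOfFin
              (by rw [Finset.card_erase_of_mem (Finset.orderEmbOfFin_mem S h q), h]; rfl) r)) := by
        rw [ih]
        have hcard : (Finset.univ.filter
            (fun k => Function.update a j false k = true)).card = t.length := by
          rw [update_filter, ← hSdef, Finset.card_erase_of_mem (Finset.orderEmbOfFin_mem S h q), h]
          rfl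
        rw [dif_pos hcard]
        congr 1
        ext p r
        simp only [Matrix.of_apply]
        congr 1
        exact orderEmbOfFin_congr (by rw [update_filter, ← hSdef]) _ _ r
      rw [hFt]
      have hsign : (Finset.univ.filter (fun k : Fin n => k < j ∧ a k = true)).card = (q : ℕ) := by
        rw [filter_lt_and, ← hSdef, hj, filter_lt_orderEmbOfFin_card]
      rw [hsign]
      have hsub : Matrix.det (Matrix.of fun p r : Fin t.length =>
            A (t.get p) ((S.erase j).orderEmbOfFin
              (by rw [Finset.card_erase_of_mem (Finset.orderEmbOfFin_mem S h q), h]; rfl) r)) =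
          Matrix.det ((Matrix.of fun p q : Fin (i :: t).length =>
            A ((i :: t).get p) (S.orderEmbOfFin h q)).submatrix Fin.succ q.succAbove) := by
        congr 1
        ext p r
        simp only [Matrix.of_apply, Matrix.submatrix_apply]
        rw [erase_orderEmbOfFin S h q]
        rfl
      rw [hsub]
      simp only [Matrix.of_apply]
      ring_nf
      rw [mul_comm (A i j)]
      rfl
    · rw [dif_neg (by simpa using h)]
      apply Finset.sum_eq_zero
      intro j hj
      have hjS : j ∈ S := hj
      rw [ih]
      have : (Finset.univ.filter (fun k => Function.update a j false k = true)).card ≠ t.length := by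
        rw [update_filter, ← hSdef, Finset.card_erase_of_mem hjS]
        intro hc
        apply h
        have : 1 ≤ S.card := Finset.card_pos.mpr ⟨j, hjS⟩
        omega
      rw [dif_neg this, mul_zero, mul_zero]

theorem det_via_grassmann (n : ℕ) (A : Matrix (Fin n) (Fin n) ℤ) :
    (((List.finRange n).map
        (fun i => ∑ j : Fin n, A i j • theta n j)).prod)
      (fun _ => true) (fun _ => false) = A.det := by
  rw [key]
  have hcard : (Finset.univ.filter (fun k : Fin n => (fun _ : Fin n => true) k = true)).card
      = (List.finRange n).length := by simp
  rw [dif_pos hcard]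
  have hmat : (Matrix.of fun p q : Fin ((List.finRange n).length) =>
        A ((List.finRange n).get p)
          ((Finset.univ.filter (fun k : Fin n => (fun _ : Fin n => true) k = true)).orderEmbOfFin
            hcard q))
      = A.submatrix (finCongr (List.length_finRange (n := n))) (finCongr (List.length_finRange (n := n))) := by
    have hemb : ∀ q : Fin ((List.finRange n).length),
        (Finset.univ.filter (fun k : Fin n => (fun _ : Fin n => true) k = true)).orderEmbOfFin
          hcard q = finCongr (List.length_finRange (n := n)) q := by
      intro q
      have := Finset.orderEmbOfFin_unique hcard
        (f := fun r : Fin ((List.finRange n).length) => finCongr (List.length_finRange (n := n)) r)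
        (fun r => Finset.mem_filter.mpr ⟨Finset.mem_univ _, rfl⟩)
        (fun r s hrs => hrs)
      exact (congrFun this q).symm
    ext p q
    rw [Matrix.of_apply, Matrix.submatrix_apply, hemb]
    congr 1
    rcases p with ⟨p, hp⟩
    rw [List.get_finRange]
    rfl
  rw [hmat, Matrix.det_submatrix_equiv_self]
end

section
/- Let n s : ℕ with s ≤ n. There exist μ : ℂ and γ : Fin s → ℂ such that the polynomial ∑_{t=0}^{s} esymm (Fin n) ℂ t - μ • ∏_{j : Fin s} (C (γ j) + ∑_{i : Fin n} X i) lies in the ideal I generated by {X i ^ 2 - X i : i ∈ Fin n}. That is, modulo I the multilinear polynomial listing all subsets of size at most s factors completely into s linear factors in the single linear functional ∑_i X i. -/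
open MvPolynomial Finset

namespace BoolRel

variable (n : ℕ)

noncomputable def I (n : ℕ) : Ideal (MvPolynomial (Fin n) ℂ) :=
  Ideal.span (Set.range fun i : Fin n => (X i : MvPolynomial (Fin n) ℂ) ^ 2 - X i)

noncomputable def π : MvPolynomial (Fin n) ℂ →ₐ[ℂ] (MvPolynomial (Fin n) ℂ ⧸ I n) :=
  Ideal.Quotient.mkₐ ℂ (I n)

noncomputable def x (i : Fin n) := π n (X i)

lemma x_sq (i : Fin n) : x n i ^ 2 = x n i := by
  have h : π n (X i ^ 2 - X i) = 0 := by
    rw [π, Ideal.Quotient.mkₐ_eq_mk, Ideal.Quotient.eq_zero_iff_mem]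
    exact Ideal.subset_span ⟨i, rfl⟩
  have := sub_eq_zero.mp (by simpa [x] using h)
  simpa [x] using this

noncomputable def ℓ : MvPolynomial (Fin n) ℂ ⧸ I n := ∑ i : Fin n, x n i

noncomputable def e (t : ℕ) := π n (esymm (Fin n) ℂ t)

lemma e_eq (t : ℕ) : e n t = ∑ R ∈ powersetCard t univ, ∏ i ∈ R, x n i := by
  simp [e, esymm, map_sum, map_prod, x]

lemma lemA (t : ℕ) : e n t * ℓ n = t • e n t + (t + 1) • e n (t + 1) := by
  classical
  rw [e_eq, e_eq, ℓ]
  have key : ∀ R ∈ powersetCard t (univ : Finset (Fin n)),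
      (∏ i ∈ R, x n i) * ∑ i : Fin n, x n i
        = t • ∏ i ∈ R, x n i + ∑ i ∈ univ \ R, ∏ j ∈ insert i R, x n j := by
    intro R hR
    have hcard : R.card = t := (mem_powersetCard.mp hR).2
    rw [Finset.mul_sum, ← Finset.sum_sdiff (subset_univ R)]
    rw [add_comm]
    congr 1
    · -- ∑ i ∈ R
      rw [← hcard, ← Finset.sum_const]
      refine Finset.sum_congr rfl fun i hi => ?_
      calc (∏ j ∈ R, x n j) * x n i
          = x n i ^ 2 * ∏ j ∈ R.erase i, x n j := by
            rw [← Finset.mul_prod_erase R _ hi]; ring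
        _ = ∏ j ∈ R, x n j := by rw [x_sq, Finset.mul_prod_erase R _ hi]
    · refine Finset.sum_congr rfl fun i hi => ?_
      rw [Finset.prod_insert (Finset.mem_sdiff.mp hi).2, mul_comm]
  calc (∑ R ∈ powersetCard t univ, ∏ i ∈ R, x n i) * ∑ i : Fin n, x n i
      = ∑ R ∈ powersetCard t univ,
          (t • ∏ i ∈ R, x n i + ∑ i ∈ univ \ R, ∏ j ∈ insert i R, x n j) := by
        rw [Finset.sum_mul]; exact Finset.sum_congr rfl key
    _ = t • ∑ R ∈ powersetCard t univ, ∏ i ∈ R, x n i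
        + ∑ R ∈ powersetCard t univ, ∑ i ∈ univ \ R, ∏ j ∈ insert i R, x n j := by
        rw [Finset.sum_add_distrib, Finset.smul_sum]
    _ = t • ∑ R ∈ powersetCard t univ, ∏ i ∈ R, x n i
        + (t + 1) • ∑ S ∈ powersetCard (t + 1) univ, ∏ i ∈ S, x n i := by
        congr 1
        have : ∑ R ∈ powersetCard t univ, ∑ i ∈ univ \ R, ∏ j ∈ insert i R, x n j
            = ∑ S ∈ powersetCard (t + 1) univ, ∑ i ∈ S, ∏ j ∈ S, x n j := by
          rw [Finset.sum_sigma', Finset.sum_sigma']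
          refine Finset.sum_nbij' (fun p => ⟨insert p.2 p.1, p.2⟩)
            (fun p => ⟨p.1.erase p.2, p.2⟩) ?_ ?_ ?_ ?_ ?_
          · rintro ⟨R, i⟩ hp
            simp only [Finset.mem_sigma, mem_powersetCard_univ, Finset.mem_sdiff] at hp ⊢
            refine ⟨?_, Finset.mem_insert_self _ _⟩
            rw [Finset.card_insert_of_notMem hp.2.2, hp.1]
          · rintro ⟨S, i⟩ hp
            simp only [Finset.mem_sigma, mem_powersetCard_univ, Finset.mem_sdiff] at hp ⊢
            refine ⟨?_, Finset.mem_univ _, Finset.notMem_erase _ _⟩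
            rw [Finset.card_erase_of_mem hp.2, hp.1]; omega
          · rintro ⟨R, i⟩ hp
            simp only [Finset.mem_sigma, Finset.mem_sdiff] at hp
            simp [Finset.erase_insert hp.2.2]
          · rintro ⟨S, i⟩ hp
            simp only [Finset.mem_sigma] at hp
            simp [Finset.insert_erase hp.2]
          · rintro ⟨R, i⟩ hp
            simp only [Finset.mem_sigma, Finset.mem_sdiff] at hp
            simp [Finset.erase_insert hp.2.2]
        rw [this, Finset.smul_sum]
        refine Finset.sum_congr rfl fun S hS => ?_
        rw [Finset.sum_const, (mem_powersetCard_univ.mp hS)]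


lemma lemB : ∀ t : ℕ,
    ∏ j ∈ Finset.range t, (ℓ n - (j : MvPolynomial (Fin n) ℂ ⧸ I n))
      = (t.factorial : MvPolynomial (Fin n) ℂ ⧸ I n) * e n t := by
  intro t
  induction t with
  | zero => simp [e, esymm_zero]
  | succ t ih =>
      rw [Finset.prod_range_succ, ih]
      have hA := lemA n t
      rw [nsmul_eq_mul, nsmul_eq_mul] at hA
      have : e n t * ℓ n - (t : MvPolynomial (Fin n) ℂ ⧸ I n) * e n t
          = ((t : MvPolynomial (Fin n) ℂ ⧸ I n) + 1) * e n (t + 1) := by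
        rw [hA]; push_cast; ring
      calc (t.factorial : MvPolynomial (Fin n) ℂ ⧸ I n) * e n t * (ℓ n - (t : MvPolynomial (Fin n) ℂ ⧸ I n))
          = (t.factorial : MvPolynomial (Fin n) ℂ ⧸ I n)
            * (e n t * ℓ n - (t : MvPolynomial (Fin n) ℂ ⧸ I n) * e n t) := by ring
        _ = ((t+1).factorial : MvPolynomial (Fin n) ℂ ⧸ I n) * e n (t + 1) := by
            rw [this, Nat.factorial_succ]; push_cast; ring

noncomputable def p (s : ℕ) : Polynomial ℂ :=
  ∑ t ∈ Finset.range (s + 1),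
    Polynomial.C ((t.factorial : ℂ)⁻¹) * ∏ j ∈ Finset.range t, (Polynomial.X - Polynomial.C (j : ℂ))

lemma prodmon (t : ℕ) : (∏ j ∈ Finset.range t, (Polynomial.X - Polynomial.C (j : ℂ))).Monic :=
  Polynomial.monic_prod_of_monic _ _ fun j _ => Polynomial.monic_X_sub_C _

lemma prodndeg (t : ℕ) :
    (∏ j ∈ Finset.range t, (Polynomial.X - Polynomial.C (j : ℂ))).natDegree = t := by
  rw [Polynomial.natDegree_prod_of_monic _ _ fun j _ => Polynomial.monic_X_sub_C _]
  have h1 : ∀ i ∈ Finset.range t, (Polynomial.X - Polynomial.C (i : ℂ)).natDegree = 1 :=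
    fun i _ => Polynomial.natDegree_X_sub_C _
  rw [Finset.sum_congr rfl h1]
  simp

lemma factC (s : ℕ) : (s.factorial : ℂ) ≠ 0 :=
  Nat.cast_ne_zero.mpr s.factorial_ne_zero

lemma coeff_p (s : ℕ) : (p s).coeff s = (s.factorial : ℂ)⁻¹ := by
  rw [p, Polynomial.finset_sum_coeff]
  have hzero : ∀ t ∈ Finset.range (s + 1), t ≠ s →
      (Polynomial.C ((t.factorial : ℂ)⁻¹) * ∏ j ∈ Finset.range t,
        (Polynomial.X - Polynomial.C (j : ℂ))).coeff s = 0 := by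
    intro t ht hts
    have htlt : t < s := by
      have := Finset.mem_range.mp ht; omega
    apply Polynomial.coeff_eq_zero_of_natDegree_lt
    calc (Polynomial.C ((t.factorial : ℂ)⁻¹) * ∏ j ∈ Finset.range t,
            (Polynomial.X - Polynomial.C (j : ℂ))).natDegree
        ≤ _ := Polynomial.natDegree_C_mul_le _ _
      _ < s := by rw [prodndeg]; exact htlt
  rw [Finset.sum_eq_single_of_mem s (Finset.self_mem_range_succ s) hzero,
    Polynomial.coeff_C_mul]
  have := (prodmon s).coeff_natDegree
  rw [prodndeg] at this
  rw [this, mul_one]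

lemma ndeg_p (s : ℕ) : (p s).natDegree = s := by
  refine le_antisymm ?_ ?_
  · refine (Polynomial.natDegree_sum_le _ _).trans ?_
    rw [Finset.fold_max_le]
    refine ⟨Nat.zero_le _, fun t ht => ?_⟩
    calc _ ≤ _ := Polynomial.natDegree_C_mul_le _ _
      _ ≤ s := by rw [prodndeg]; exact Nat.lt_succ_iff.mp (Finset.mem_range.mp ht)
  · apply Polynomial.le_natDegree_of_ne_zero
    rw [coeff_p]
    exact inv_ne_zero (factC s)

lemma p_ne_zero (s : ℕ) : p s ≠ 0 := fun h => by
  have h2 := coeff_p s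
  rw [h, Polynomial.coeff_zero] at h2
  exact inv_ne_zero (factC s) h2.symm

lemma aeval_p (s : ℕ) :
    Polynomial.aeval (ℓ n) (p s) = ∑ t ∈ Finset.range (s + 1), e n t := by
  rw [p, map_sum]
  refine Finset.sum_congr rfl fun t _ => ?_
  rw [map_mul, map_prod, Polynomial.aeval_C]
  have : ∀ j ∈ Finset.range t,
      Polynomial.aeval (ℓ n) (Polynomial.X - Polynomial.C (j : ℂ))
        = ℓ n - (j : MvPolynomial (Fin n) ℂ ⧸ I n) := by
    intro j _
    rw [map_sub, Polynomial.aeval_X, Polynomial.aeval_C, map_natCast]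
  rw [Finset.prod_congr rfl this, lemB]
  have hcast : ((t.factorial : ℕ) : MvPolynomial (Fin n) ℂ ⧸ I n)
      = algebraMap ℂ _ ((t.factorial : ℕ) : ℂ) := by rw [map_natCast]
  rw [hcast, ← mul_assoc, ← map_mul, inv_mul_cancel₀ (factC t), map_one, one_mul]

lemma leading_p (s : ℕ) : (p s).leadingCoeff = (s.factorial : ℂ)⁻¹ := by
  rw [Polynomial.leadingCoeff, ndeg_p, coeff_p]

lemma main_eq (n s : ℕ) :
    ∑ t ∈ Finset.range (s + 1), e n t
      = (s.factorial : ℂ)⁻¹ •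
        ∏ j : Fin s, (algebraMap ℂ (MvPolynomial (Fin n) ℂ ⧸ I n)
            (-( (p s).roots.toList.get
              (Fin.cast (by rw [Multiset.length_toList,
                Polynomial.splits_iff_card_roots.mp (IsAlgClosed.splits (p s)),
                ndeg_p] : (p s).roots.toList.length = s).symm j)))
          + ℓ n) := by
  classical
  have hsp : (p s).Splits := IsAlgClosed.splits (p s)
  have hfac := hsp.eq_prod_roots
  have hlen : (p s).roots.toList.length = s := by
    rw [Multiset.length_toList, Polynomial.splits_iff_card_roots.mp hsp, ndeg_p]
  set l := (p s).roots.toList with hldef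
  rw [← aeval_p]
  conv_lhs => rw [hfac]
  rw [map_mul, Polynomial.aeval_C, leading_p, ← Algebra.smul_def]
  congr 1
  have hml : (p s).roots = (l : Multiset ℂ) := (Multiset.coe_toList _).symm
  conv_lhs => rw [hml]
  rw [show Multiset.map (fun a => Polynomial.X - Polynomial.C a) (l : Multiset ℂ)
      = ((l.map fun a => Polynomial.X - Polynomial.C a : List (Polynomial ℂ)) : Multiset _)
    from Multiset.map_coe _ _, Multiset.prod_coe]
  rw [← Fin.prod_univ_fun_getElem l (fun a => Polynomial.X - Polynomial.C a), map_prod]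
  refine Fintype.prod_equiv (finCongr hlen)
    (fun i : Fin l.length => Polynomial.aeval (ℓ n) (Polynomial.X - Polynomial.C l[i.1]))
    (fun j : Fin s => algebraMap ℂ (MvPolynomial (Fin n) ℂ ⧸ I n)
        (-(l.get (Fin.cast hlen.symm j))) + ℓ n)
    fun i => ?_
  beta_reduce
  rw [map_sub, Polynomial.aeval_X, Polynomial.aeval_C, map_neg]
  have h2 : Fin.cast hlen.symm (finCongr hlen i) = i := rfl
  rw [h2, List.get_eq_getElem]
  ring

end BoolRel

open BoolRel in
theorem sum_esymm_le_factors_modulo_boolean_relations (n s : ℕ) (hs : s ≤ n) :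
    ∃ (μ : ℂ) (γ : Fin s → ℂ),
      (∑ t ∈ Finset.range (s + 1), MvPolynomial.esymm (Fin n) ℂ t) -
        μ • ∏ j : Fin s, (C (γ j) + ∑ i : Fin n, (X i : MvPolynomial (Fin n) ℂ)) ∈
        Ideal.span (Set.range fun i : Fin n =>
          (X i : MvPolynomial (Fin n) ℂ) ^ 2 - X i) := by
  classical
  have hlen : (p s).roots.toList.length = s := by
    rw [Multiset.length_toList,
      Polynomial.splits_iff_card_roots.mp (IsAlgClosed.splits (p s)), ndeg_p]
  refine ⟨(s.factorial : ℂ)⁻¹,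
    fun j => -((p s).roots.toList.get (Fin.cast hlen.symm j)), ?_⟩
  have key := main_eq n s
  rw [show Ideal.span (Set.range fun i : Fin n =>
      (X i : MvPolynomial (Fin n) ℂ) ^ 2 - X i) = I n from rfl]
  rw [← Ideal.Quotient.eq_zero_iff_mem]
  have hπ : (Ideal.Quotient.mk (I n)) = (π n : MvPolynomial (Fin n) ℂ → _) := rfl
  show π n _ = 0
  rw [map_sub, map_sum, map_smul, map_prod]
  rw [sub_eq_zero]
  have hfactor : ∀ j : Fin s,
      π n (C (-((p s).roots.toList.get (Fin.cast hlen.symm j))) + ∑ i : Fin n, X i)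
        = algebraMap ℂ (MvPolynomial (Fin n) ℂ ⧸ I n)
            (-((p s).roots.toList.get (Fin.cast hlen.symm j))) + ℓ n := by
    intro j
    simp only [map_add, map_sum, ← MvPolynomial.algebraMap_eq, AlgHom.commutes]
    rfl
  rw [Finset.prod_congr rfl fun j _ => hfactor j]
  exact key
end

section
/- Let n s : ℕ with s ≤ n. There exist μ : ℂ and γ : Fin n → ℂ such that the polynomial ∑_{t=s}^{n} esymm (Fin n) ℂ t - μ • ∏_{j : Fin n} (C (γ j) + ∑_{i : Fin n} X i) lies in the ideal I generated by {X i ^ 2 - X i : i ∈ Fin n}. That is, modulo I the multilinear polynomial listing all subsets of size at least s factors completely into n linear factors in the single linear functional ∑_i X i. -/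
open MvPolynomial

lemma interp (n : ℕ) (p : MvPolynomial (Fin (n+1)) ℂ) :
    p - (X 0 * rename Fin.succ (aeval (Fin.cases 1 X) p)
       + (1 - X 0) * rename Fin.succ (aeval (Fin.cases 0 X) p)) ∈
    Ideal.span {(X 0 : MvPolynomial (Fin (n+1)) ℂ) ^ 2 - X 0} := by
  have hgen : (X 0 : MvPolynomial (Fin (n+1)) ℂ) ^ 2 - X 0 ∈
      Ideal.span {(X 0 : MvPolynomial (Fin (n+1)) ℂ) ^ 2 - X 0} :=
    Ideal.subset_span rfl
  induction p using MvPolynomial.induction_on with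
  | C a =>
      simp only [aeval_C, algebraMap_eq, rename_C]
      convert Ideal.zero_mem (Ideal.span {(X 0 : MvPolynomial (Fin (n+1)) ℂ) ^ 2 - X 0}) using 1
      ring
  | add p q hp hq =>
      have := Ideal.add_mem _ hp hq
      convert this using 1
      simp only [map_add]
      ring
  | mul_X p i hp =>
      rcases Fin.eq_zero_or_eq_succ i with rfl | ⟨j, rfl⟩
      · simp only [map_mul, aeval_X, Fin.cases_zero, mul_one, mul_zero, map_zero, map_one]
        convert Ideal.add_mem _ (Ideal.mul_mem_left _ (X 0) hp)
          (Ideal.mul_mem_left _ (rename Fin.succ (aeval (Fin.cases 1 X) p)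
             - rename Fin.succ (aeval (Fin.cases 0 X) p)) hgen) using 1
        ring
      · simp only [map_mul, aeval_X, Fin.cases_succ, rename_X]
        convert Ideal.mul_mem_right (X j.succ) _ hp using 1
        ring

lemma eval_aeval_cases (n : ℕ) (c : ℂ) (x : Fin n → ℂ) (p : MvPolynomial (Fin (n+1)) ℂ) :
    eval x (aeval (Fin.cases (C c) X : Fin (n+1) → MvPolynomial (Fin n) ℂ) p)
      = eval (Fin.cases c x) p := by
  have := MvPolynomial.ringHom_ext (σ := Fin (n+1))
    (f := (eval x).comp (aeval (Fin.cases (C c) X : Fin (n+1) → MvPolynomial (Fin n) ℂ)).toRingHom)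
    (g := eval (Fin.cases c x)) (by intro a; simp) (by
      intro i
      refine Fin.cases ?_ ?_ i <;> simp)
  exact DFunLike.congr_fun this p

lemma vanish_mem : ∀ (n : ℕ) (p : MvPolynomial (Fin n) ℂ),
    (∀ x : Fin n → ℂ, (∀ i, x i = 0 ∨ x i = 1) → eval x p = 0) →
    p ∈ Ideal.span (Set.range fun i : Fin n =>
      (X i : MvPolynomial (Fin n) ℂ) ^ 2 - X i) := by
  intro n
  induction n with
  | zero =>
      intro p h
      obtain ⟨a, rfl⟩ := MvPolynomial.C_surjective (Fin 0) p
      have := h finZeroElim (fun i => i.elim0)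
      rw [eval_C] at this
      rw [this, map_zero]
      exact Ideal.zero_mem _
  | succ n ih =>
      intro p h
      set p1 := aeval (Fin.cases (C 1) X : Fin (n+1) → MvPolynomial (Fin n) ℂ) p with hp1
      set p0 := aeval (Fin.cases (C 0) X : Fin (n+1) → MvPolynomial (Fin n) ℂ) p with hp0
      have h1 : p1 ∈ Ideal.span (Set.range fun i : Fin n => (X i : MvPolynomial (Fin n) ℂ)^2 - X i) := by
        apply ih
        intro x hx
        rw [hp1, eval_aeval_cases]
        apply h
        intro i
        refine Fin.cases ?_ ?_ i
        · right; rfl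
        · intro j; exact hx j
      have h0 : p0 ∈ Ideal.span (Set.range fun i : Fin n => (X i : MvPolynomial (Fin n) ℂ)^2 - X i) := by
        apply ih
        intro x hx
        rw [hp0, eval_aeval_cases]
        apply h
        intro i
        refine Fin.cases ?_ ?_ i
        · left; rfl
        · intro j; exact hx j
      have hmap : ∀ q : MvPolynomial (Fin n) ℂ,
          q ∈ Ideal.span (Set.range fun i : Fin n => (X i : MvPolynomial (Fin n) ℂ)^2 - X i) →
          rename Fin.succ q ∈ Ideal.span (Set.range fun i : Fin (n+1) =>
            (X i : MvPolynomial (Fin (n+1)) ℂ)^2 - X i) := by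
        intro q hq
        have := Ideal.mem_map_of_mem (rename (R := ℂ) Fin.succ).toRingHom hq
        rw [Ideal.map_span] at this
        refine Ideal.span_le.mpr ?_ this
        rintro _ ⟨_, ⟨i, rfl⟩, rfl⟩
        apply Ideal.subset_span
        exact ⟨i.succ, by simp⟩
      have hsingle : Ideal.span {(X 0 : MvPolynomial (Fin (n+1)) ℂ)^2 - X 0} ≤
          Ideal.span (Set.range fun i : Fin (n+1) => (X i : MvPolynomial (Fin (n+1)) ℂ)^2 - X i) := by
        apply Ideal.span_le.mpr
        rintro _ rfl
        exact Ideal.subset_span ⟨0, rfl⟩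
      have hd := hsingle (interp n p)
      have key : p = (p - (X 0 * rename Fin.succ p1 + (1 - X 0) * rename Fin.succ p0))
          + X 0 * rename Fin.succ p1 + (1 - X 0) * rename Fin.succ p0 := by ring
      rw [key]
      refine Ideal.add_mem _ (Ideal.add_mem _ ?_ (Ideal.mul_mem_left _ _ (hmap _ h1)))
        (Ideal.mul_mem_left _ _ (hmap _ h0))
      convert hd using 2 <;> simp [hp1, hp0]

noncomputable def gpoly (s n : ℕ) : Polynomial ℂ :=
  ∑ t ∈ Finset.Icc s n, Polynomial.C ((t.factorial : ℂ)⁻¹) * descPochhammer ℂ t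

lemma gpoly_eval (s n k : ℕ) :
    (gpoly s n).eval (k : ℂ) = ∑ t ∈ Finset.Icc s n, (k.choose t : ℂ) := by
  rw [gpoly, Polynomial.eval_finset_sum]
  refine Finset.sum_congr rfl fun t _ => ?_
  rw [Polynomial.eval_mul, Polynomial.eval_C, descPochhammer_eval_eq_descFactorial,
    Nat.descFactorial_eq_factorial_mul_choose, Nat.cast_mul]
  rw [← mul_assoc, inv_mul_cancel₀ (by exact_mod_cast t.factorial_ne_zero : (t.factorial : ℂ) ≠ 0), one_mul]

lemma gpoly_coeff (s n : ℕ) (hs : s ≤ n) : (gpoly s n).coeff n = (n.factorial : ℂ)⁻¹ := by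
  rw [gpoly, Polynomial.finset_sum_coeff]
  rw [Finset.sum_eq_single n]
  · rw [Polynomial.coeff_C_mul]
    have h := (monic_descPochhammer ℂ n).coeff_natDegree
    rw [descPochhammer_natDegree] at h
    rw [h, mul_one]
  · intro t ht hne
    rw [Polynomial.coeff_C_mul,
      Polynomial.coeff_eq_zero_of_natDegree_lt, mul_zero]
    rw [descPochhammer_natDegree]
    exact lt_of_le_of_ne (Finset.mem_Icc.mp ht).2 hne
  · intro hn
    exact absurd (Finset.mem_Icc.mpr ⟨hs, le_refl n⟩) hn

lemma gpoly_natDegree (s n : ℕ) (hs : s ≤ n) : (gpoly s n).natDegree = n := by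
  refine le_antisymm ?_ ?_
  · apply Polynomial.natDegree_sum_le_of_forall_le
    intro t ht
    refine le_trans (Polynomial.natDegree_C_mul_le _ _) ?_
    rw [descPochhammer_natDegree]
    exact (Finset.mem_Icc.mp ht).2
  · apply Polynomial.le_natDegree_of_ne_zero
    rw [gpoly_coeff s n hs]
    exact inv_ne_zero (by exact_mod_cast n.factorial_ne_zero : (n.factorial : ℂ) ≠ 0)

lemma gpoly_ne_zero (s n : ℕ) (hs : s ≤ n) : gpoly s n ≠ 0 := by
  intro h
  have := gpoly_coeff s n hs
  rw [h, Polynomial.coeff_zero] at this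
  exact inv_ne_zero (by exact_mod_cast n.factorial_ne_zero : (n.factorial : ℂ) ≠ 0) this.symm

lemma exists_factor (s n : ℕ) (hs : s ≤ n) :
    ∃ (μ : ℂ) (γ : Fin n → ℂ), ∀ k : ℕ,
      ∑ t ∈ Finset.Icc s n, (k.choose t : ℂ) = μ * ∏ j : Fin n, (γ j + k) := by
  set g := gpoly s n with hg
  have hsplits : Polynomial.Splits g := IsAlgClosed.splits g
  have hcard : g.roots.card = n := by
    rw [(Polynomial.splits_iff_card_roots).mp hsplits, gpoly_natDegree s n hs]
  set l := g.roots.toList with hlist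
  have hl : l.length = n := by rw [hlist, Multiset.length_toList, hcard]
  refine ⟨g.leadingCoeff, fun j => - l.get (Fin.cast hl.symm j), fun k => ?_⟩
  have heq := hsplits.eq_prod_roots
  have hev : g.eval (k : ℂ)
      = g.leadingCoeff * ((g.roots.map fun a => (k : ℂ) - a)).prod := by
    conv_lhs => rw [heq]
    rw [Polynomial.eval_mul, Polynomial.eval_C, Polynomial.eval_multiset_prod,
      Multiset.map_map]
    simp
  rw [← gpoly_eval, ← hg, hev]
  congr 1
  have hroots : g.roots = (l : Multiset ℂ) := (Multiset.coe_toList g.roots).symm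
  rw [hroots]
  rw [show ((l : Multiset ℂ).map fun a => (k : ℂ) - a) = ((l.map fun a => (k : ℂ) - a) : Multiset ℂ) from rfl,
    Multiset.prod_coe]
  conv_lhs => rw [← List.ofFn_get l, List.map_ofFn, List.prod_ofFn]
  simp only [Function.comp]
  rw [← Fin.prod_congr' (fun i : Fin l.length => ((k : ℂ) - l.get i)) hl.symm]
  refine Finset.prod_congr rfl fun j _ => ?_
  ring

theorem sum_esymm_ge_factors_modulo_boolean_relations (n s : ℕ) (hs : s ≤ n) :
    ∃ (μ : ℂ) (γ : Fin n → ℂ),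
      (∑ t ∈ Finset.Icc s n, MvPolynomial.esymm (Fin n) ℂ t) -
        μ • ∏ j : Fin n, (C (γ j) + ∑ i : Fin n, (X i : MvPolynomial (Fin n) ℂ)) ∈
        Ideal.span (Set.range fun i : Fin n =>
          (X i : MvPolynomial (Fin n) ℂ) ^ 2 - X i) := by
  classical
  obtain ⟨μ, γ, hfac⟩ := exists_factor s n hs
  refine ⟨μ, γ, vanish_mem n _ fun x hx => ?_⟩
  set S := Finset.univ.filter (fun i => x i = 1) with hS
  set k := S.card with hk
  have hx' : ∀ i, x i = if i ∈ S then 1 else 0 := by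
    intro i
    rcases hx i with h0 | h1
    · rw [if_neg, h0]
      simp only [hS, Finset.mem_filter, Finset.mem_univ, true_and]
      rw [h0]; exact zero_ne_one
    · rw [if_pos, h1]
      simp only [hS, Finset.mem_filter, Finset.mem_univ, true_and]
      exact h1
  have hsum : ∑ i : Fin n, x i = (k : ℂ) := by
    rw [Finset.sum_congr rfl fun i _ => hx' i, Finset.sum_boole, hk, hS]
    congr 2
    simp [Finset.filter_mem_eq_inter]
  have hesymm : ∀ t, eval x (esymm (Fin n) ℂ t) = (k.choose t : ℂ) := by
    intro t
    rw [esymm, map_sum]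
    have : ∀ A ∈ Finset.univ.powersetCard t,
        eval x (∏ i ∈ A, (X i : MvPolynomial (Fin n) ℂ)) = if A ⊆ S then (1 : ℂ) else 0 := by
      intro A _
      rw [map_prod]
      simp only [eval_X]
      by_cases h : A ⊆ S
      · rw [if_pos h]
        rw [Finset.prod_congr rfl fun i hi => by rw [hx' i, if_pos (h hi)]]
        exact Finset.prod_const_one
      · rw [if_neg h]
        obtain ⟨i, hiA, hiS⟩ := Finset.not_subset.mp h
        exact Finset.prod_eq_zero hiA (by rw [hx' i, if_neg hiS])
    rw [Finset.sum_congr rfl this, Finset.sum_boole]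
    congr 1
    have : (Finset.univ.powersetCard t).filter (· ⊆ S) = S.powersetCard t := by
      ext A
      simp only [Finset.mem_filter, Finset.mem_powersetCard, Finset.subset_univ, true_and]
      tauto
    rw [this, hk]
    exact_mod_cast congrArg Nat.cast (S.card_powersetCard t)
  rw [map_sub, map_sum, smul_eq_C_mul, map_mul, eval_C, map_prod]
  have hfactor : ∀ j : Fin n,
      eval x (C (γ j) + ∑ i : Fin n, (X i : MvPolynomial (Fin n) ℂ)) = γ j + k := by
    intro j
    rw [map_add, eval_C, map_sum]
    simp only [eval_X]
    rw [hsum]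
  rw [Finset.prod_congr rfl fun j _ => hfactor j,
    Finset.sum_congr rfl fun t _ => hesymm t, hfac k, sub_self]
end
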